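/- arXiv:2308.15715 — 2 statements merged into one kernel-verified Lean document; each statement's English description precedes it below -/
import Mathlib

section
/- (Backward-in-time uniqueness.) Assume Ω is connected, and let (w₁, w₂, q₁, q₂) satisfy the homogeneous DPP difference system with the stated regularity and boundary-condition encodings (H1)–(H2). If w₁(x, T) = 0 and w₂(x, T) = 0 for every x ∈ Ω, then w₁(x, t) = 0 and w₂(x, t) = 0 for every x ∈ Ω and every t ∈ [0, T]; moreover, for each t ∈ [0, T] there is a constant C(t) such that q₁(x, t) = q₂(x, t) = C(t) for every x ∈ Ω. -/
open Set MeasureTheory Matrix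

/-- Divergence associated with a (spatial) Jacobian, i.e. the trace of the Fréchet
derivative of a vector field on ℝ³. -/
noncomputable def divOf (J : (Fin 3 → ℝ) →L[ℝ] (Fin 3 → ℝ)) : ℝ :=
  ∑ j : Fin 3, J (Pi.single j 1) j


-- integrability helper
lemma myIntOn {U : Set (Fin 3 → ℝ)} (hUm : MeasurableSet U) (hUb : Bornology.IsBounded U)
    {h : (Fin 3 → ℝ) → ℝ} (hc : ContinuousOn h U) {C : ℝ} (hb : ∀ x ∈ U, |h x| ≤ C) :
    IntegrableOn h U := by
  refine ⟨hc.aestronglyMeasurable hUm, ?_⟩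
  refine HasFiniteIntegral.restrict_of_bounded (C := C) hUb.measure_lt_top ?_
  exact (ae_restrict_iff' hUm).2 (Filter.Eventually.of_forall fun x hx => by
    simpa [Real.norm_eq_abs] using hb x hx)

-- zero of integral of nonneg continuous
lemma myZero {U : Set (Fin 3 → ℝ)} (hU : IsOpen U) (hUb : Bornology.IsBounded U)
    {h : (Fin 3 → ℝ) → ℝ} (hc : ContinuousOn h U) (hi : IntegrableOn h U)
    (hnn : ∀ x ∈ U, 0 ≤ h x) (hz : (∫ x in U, h x) = 0) : ∀ x ∈ U, h x = 0 := by
  have hae : h =ᵐ[volume.restrict U] 0 := by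
    refine (setIntegral_eq_zero_iff_of_nonneg_ae ?_ hi).1 hz
    exact (ae_restrict_iff' hU.measurableSet).2 (Filter.Eventually.of_forall hnn)
  intro x hx
  by_contra hne
  have hca : ContinuousAt h x := hc.continuousAt (hU.mem_nhds hx)
  have hpos : 0 < |h x| := abs_pos.2 hne
  obtain ⟨δ, hδ, hball⟩ := Metric.mem_nhds_iff.1 (hca ( Metric.ball_mem_nhds (h x) (half_pos hpos)))
  obtain ⟨δ', hδ', hball2⟩ := Metric.mem_nhds_iff.1 (hU.mem_nhds hx)
  set ε := min δ δ'
  have hεpos : 0 < ε := lt_min hδ hδ'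
  have hsub : Metric.ball x ε ⊆ {y | h y ≠ 0} := by
    intro y hy
    have h1 : h y ∈ Metric.ball (h x) (|h x|/2) := hball (Metric.ball_subset_ball (min_le_left _ _) hy)
    simp only [Metric.mem_ball, Real.dist_eq] at h1
    intro h0
    rw [h0] at h1
    simp only [zero_sub, abs_neg] at h1
    linarith
  have hmeas : (volume.restrict U) {y | h y ≠ 0} = 0 := by
    simpa [Filter.EventuallyEq, ae_iff] using hae
  have : (volume.restrict U) (Metric.ball x ε) = 0 :=
    le_antisymm (hmeas ▸ measure_mono hsub) zero_le
  rw [Measure.restrict_apply' hU.measurableSet] at this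
  have hballU : Metric.ball x ε ∩ U = Metric.ball x ε := by
    refine inter_eq_left.2 (fun y hy => hball2 (Metric.ball_subset_ball (min_le_right _ _) hy))
  rw [hballU] at this
  exact absurd this (Metric.measure_ball_pos volume x hεpos).ne'

-- backward uniqueness from log-convexity inequality
lemma myBackward {T : ℝ} (hT : 0 < T) {f g r : ℝ → ℝ}
    (hf : ∀ t ∈ Icc (0:ℝ) T, HasDerivWithinAt f (g t) (Icc (0:ℝ) T) t)
    (hg : ∀ t ∈ Icc (0:ℝ) T, HasDerivWithinAt g (r t) (Icc (0:ℝ) T) t)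
    (hf0 : ∀ t ∈ Icc (0:ℝ) T, 0 ≤ f t)
    (hgle : ∀ t ∈ Icc (0:ℝ) T, g t ≤ 0)
    (hcs : ∀ t ∈ Icc (0:ℝ) T, g t ^ 2 ≤ f t * r t)
    (hfT : f T = 0) : ∀ t ∈ Icc (0:ℝ) T, f t = 0 := by
  by_contra hcon
  push_neg at hcon
  obtain ⟨t₀, ht₀, hft₀⟩ := hcon
  have hft₀pos : 0 < f t₀ := lt_of_le_of_ne (hf0 t₀ ht₀) (Ne.symm hft₀)
  have hfc : ContinuousOn f (Icc 0 T) := fun t ht => (hf t ht).continuousWithinAt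
  have hgc : ContinuousOn g (Icc 0 T) := fun t ht => (hg t ht).continuousWithinAt
  set Z : Set ℝ := {s | s ∈ Icc t₀ T ∧ f s = 0} with hZ
  have hsubI : Icc t₀ T ⊆ Icc 0 T := Icc_subset_Icc ht₀.1 le_rfl
  have hTZ : T ∈ Z := ⟨⟨ht₀.2, le_rfl⟩, hfT⟩
  have hZclosed : IsClosed Z := by
    have : Z = Icc t₀ T ∩ f ⁻¹' {0} := by ext s; simp [hZ]
    rw [this]
    exact ContinuousOn.preimage_isClosed_of_isClosed (hfc.mono hsubI) isClosed_Icc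
      isClosed_singleton
  have hbdd : BddBelow Z := ⟨t₀, fun s hs => hs.1.1⟩
  set t₁ := sInf Z with ht₁def
  have ht₁Z : t₁ ∈ Z := hZclosed.csInf_mem ⟨T, hTZ⟩ hbdd
  have ht₀t₁ : t₀ ≤ t₁ := le_csInf ⟨T, hTZ⟩ fun s hs => hs.1.1
  have ht₁T : t₁ ≤ T := ht₁Z.1.2
  have ht₁ne : t₀ ≠ t₁ := by
    intro h
    rw [← h] at ht₁Z
    exact hft₀ ht₁Z.2
  have ht₀lt : t₀ < t₁ := lt_of_le_of_ne ht₀t₁ ht₁ne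
  have hIccsub : Icc t₀ t₁ ⊆ Icc 0 T := Icc_subset_Icc ht₀.1 ht₁T
  have hpos : ∀ s ∈ Ico t₀ t₁, 0 < f s := by
    intro s hs
    have hsI : s ∈ Icc 0 T := hIccsub ⟨hs.1, hs.2.le⟩
    refine lt_of_le_of_ne (hf0 s hsI) fun h => ?_
    have : s ∈ Z := ⟨⟨hs.1, hs.2.le.trans ht₁T⟩, h.symm⟩
    exact absurd (csInf_le hbdd this) (not_le.2 hs.2)
  set m := g t₀ / f t₀ with hm
  have hmle : m ≤ 0 := div_nonpos_of_nonpos_of_nonneg (hgle t₀ ht₀) hft₀pos.le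
  set ε := f t₀ * Real.exp (m * T) with hε
  have hεpos : 0 < ε := mul_pos hft₀pos (Real.exp_pos _)
  have key : ∀ s ∈ Ico t₀ t₁, ε ≤ f s := by
    intro s hs
    rcases eq_or_lt_of_le hs.1 with heq | hlt
    · rw [← heq]
      have : Real.exp (m * T) ≤ 1 := Real.exp_le_one_iff.2 (mul_nonpos_of_nonpos_of_nonneg hmle hT.le)
      calc ε ≤ f t₀ * 1 := by
                exact mul_le_mul_of_nonneg_left this hft₀pos.le
        _ = f t₀ := mul_one _
    · -- s > t₀
      have hsIcc : Icc t₀ s ⊆ Icc 0 T := Icc_subset_Icc ht₀.1 (hs.2.le.trans ht₁T)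
      have hsub2 : Icc t₀ s ⊆ Ico t₀ t₁ := fun u hu => ⟨hu.1, lt_of_le_of_lt hu.2 hs.2⟩
      have hfposI : ∀ u ∈ Icc t₀ s, 0 < f u := fun u hu => hpos u (hsub2 hu)
      have hint : ∀ u ∈ Ioo t₀ s, Icc (0:ℝ) T ∈ nhds u := by
        intro u hu
        refine Filter.mem_of_superset (isOpen_Ioo.mem_nhds (show u ∈ Ioo (0:ℝ) T from
          ⟨lt_of_le_of_lt ht₀.1 hu.1, lt_of_lt_of_le hu.2 (hs.2.le.trans ht₁T)⟩)) Ioo_subset_Icc_self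
      have hfd : ∀ u ∈ Ioo t₀ s, HasDerivAt f (g u) u := fun u hu =>
        (hf u (hsIcc (Ioo_subset_Icc_self hu))).hasDerivAt (hint u hu)
      have hgd : ∀ u ∈ Ioo t₀ s, HasDerivAt g (r u) u := fun u hu =>
        (hg u (hsIcc (Ioo_subset_Icc_self hu))).hasDerivAt (hint u hu)
      -- step A : g/f monotone on Icc t₀ s
      have hintI : interior (Icc t₀ s) = Ioo t₀ s := interior_Icc
      have hmono : MonotoneOn (fun u => g u / f u) (Icc t₀ s) := by
        apply monotoneOn_of_deriv_nonneg (convex_Icc t₀ s)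
        · exact ((hgc.mono hsIcc).div (hfc.mono hsIcc) fun u hu => (hfposI u hu).ne')
        · rw [hintI]
          intro u hu
          exact (((hgd u hu).div (hfd u hu) (hfposI u (Ioo_subset_Icc_self hu)).ne')).differentiableAt.differentiableWithinAt
        · rw [hintI]
          intro u hu
          have hd := (hgd u hu).div (hfd u hu) (hfposI u (Ioo_subset_Icc_self hu)).ne'
          rw [(show (fun u => g u / f u) = g / f from rfl), hd.deriv]
          apply div_nonneg _ (sq_nonneg _)
          have huI : u ∈ Icc (0:ℝ) T := hsIcc (Ioo_subset_Icc_self hu)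
          have := hcs u huI
          nlinarith [this]
      have hglb : ∀ u ∈ Icc t₀ s, m * f u ≤ g u := by
        intro u hu
        have h1 : m ≤ g u / f u := by
          have := hmono (left_mem_Icc.2 hlt.le) hu hu.1
          simpa [hm] using this
        have := (le_div_iff₀ (hfposI u hu)).1 h1
        linarith
      -- step B : f u * exp (-(m * u)) monotone on Icc t₀ s
      have hmono2 : MonotoneOn (fun u => f u * Real.exp (-(m * u))) (Icc t₀ s) := by
        apply monotoneOn_of_deriv_nonneg (convex_Icc t₀ s)
        · exact (hfc.mono hsIcc).mul (Real.continuous_exp.comp (continuous_const.mul continuous_id).neg).continuousOn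
        · rw [hintI]
          intro u hu
          have hexp : HasDerivAt (fun u => Real.exp (-(m * u))) (Real.exp (-(m * u)) * (-m)) u := by
            have h1 : HasDerivAt (fun u : ℝ => -(m * u)) (-m) u := by
              simpa using ((hasDerivAt_id u).const_mul m).fun_neg
            exact h1.exp
          exact ((hfd u hu).mul hexp).differentiableAt.differentiableWithinAt
        · rw [hintI]
          intro u hu
          have hexp : HasDerivAt (fun u => Real.exp (-(m * u))) (Real.exp (-(m * u)) * (-m)) u := by
            have h1 : HasDerivAt (fun u : ℝ => -(m * u)) (-m) u := by
              simpa using ((hasDerivAt_id u).const_mul m).fun_neg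
            exact h1.exp
          have hd := (hfd u hu).mul hexp
          rw [(show (fun u => f u * Real.exp (-(m * u))) = (f * fun u => Real.exp (-(m * u))) from rfl), hd.deriv]
          have hge := hglb u (Ioo_subset_Icc_self hu)
          have hepos := Real.exp_pos (-(m * u))
          nlinarith
      have hstep := hmono2 (left_mem_Icc.2 hlt.le) (right_mem_Icc.2 hlt.le) hlt.le
      -- f s ≥ f t₀ * exp (m (s - t₀)) ≥ f t₀ * exp (m T) = ε
      have h2 : f t₀ * Real.exp (m * s - m * t₀) ≤ f s := by
        have hep := Real.exp_pos (-(m * s))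
        have : f t₀ * Real.exp (-(m * t₀)) * Real.exp (m * s) ≤ f s * Real.exp (-(m * s)) * Real.exp (m * s) := by
          exact mul_le_mul_of_nonneg_right hstep (Real.exp_pos _).le
        rw [mul_assoc, mul_assoc, ← Real.exp_add, ← Real.exp_add] at this
        simpa [sub_eq_add_neg, add_comm] using this
      have h3 : Real.exp (m * T) ≤ Real.exp (m * s - m * t₀) := by
        apply Real.exp_le_exp.2
        have h4 : s - t₀ ≤ T := by
          have : s ≤ T := hs.2.le.trans ht₁T
          linarith [ht₀.1]
        nlinarith [hmle, h4, sub_nonneg.2 hlt.le]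
      calc ε = f t₀ * Real.exp (m * T) := rfl
        _ ≤ f t₀ * Real.exp (m * s - m * t₀) := mul_le_mul_of_nonneg_left h3 hft₀pos.le
        _ ≤ f s := h2
  -- continuity at t₁ gives f t₁ ≥ ε > 0, contradiction with f t₁ = 0
  have hlim : Filter.Tendsto f (nhdsWithin t₁ (Ico t₀ t₁)) (nhds (f t₁)) := by
    have := (hfc t₁ (hIccsub (right_mem_Icc.2 ht₀t₁))).mono (show Ico t₀ t₁ ⊆ Icc 0 T from
      fun u hu => hIccsub ⟨hu.1, hu.2.le⟩)
    exact this.tendsto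
  have hnebot : (nhdsWithin t₁ (Ico t₀ t₁)).NeBot := by
    rw [← mem_closure_iff_nhdsWithin_neBot, closure_Ico ht₀lt.ne]
    exact right_mem_Icc.2 ht₀t₁
  have hev : ∀ᶠ u in nhdsWithin t₁ (Ico t₀ t₁), ε ≤ f u :=
    eventually_nhdsWithin_of_forall key
  have : ε ≤ f t₁ := ge_of_tendsto hlim hev
  rw [ht₁Z.2] at this
  linarith

-- derivative of dot product of two curves
lemma myDotDeriv {u v : ℝ → Fin 3 → ℝ} {u' v' : Fin 3 → ℝ} {s : Set ℝ} {t : ℝ}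
    (hu : HasDerivWithinAt u u' s t) (hv : HasDerivWithinAt v v' s t) :
    HasDerivWithinAt (fun τ => u τ ⬝ᵥ v τ) (u' ⬝ᵥ v t + u t ⬝ᵥ v') s t := by
  simp only [dotProduct]
  rw [show (∑ i, u' i * v t i) + ∑ i, u t i * v' i = ∑ i, (u' i * v t i + u t i * v' i) by
    rw [Finset.sum_add_distrib]]
  apply HasDerivWithinAt.fun_sum
  intro i _
  exact (hasDerivWithinAt_pi.1 hu i).mul (hasDerivWithinAt_pi.1 hv i)

-- derivative of matrix-vector product
lemma myMulVecDeriv (M : Matrix (Fin 3) (Fin 3) ℝ) {v : ℝ → Fin 3 → ℝ} {v' : Fin 3 → ℝ}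
    {s : Set ℝ} {t : ℝ} (hv : HasDerivWithinAt v v' s t) :
    HasDerivWithinAt (fun τ => M *ᵥ v τ) (M *ᵥ v') s t := by
  rw [hasDerivWithinAt_pi]
  intro i
  simp only [Matrix.mulVec, dotProduct]
  apply HasDerivWithinAt.fun_sum
  intro j _
  exact (hasDerivWithinAt_pi.1 hv j).const_mul _

-- symmetric matrix dot identity
lemma mySymmDot {M : Matrix (Fin 3) (Fin 3) ℝ} (hM : M.IsSymm) (u v : Fin 3 → ℝ) :
    u ⬝ᵥ (M *ᵥ v) = v ⬝ᵥ (M *ᵥ u) := by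
  rw [Matrix.dotProduct_mulVec, ← Matrix.mulVec_transpose, hM.eq, dotProduct_comm]

-- inverse of symmetric is symmetric
lemma mySymmInv {M : Matrix (Fin 3) (Fin 3) ℝ} (hM : M.IsSymm) : (M⁻¹).IsSymm := by
  unfold Matrix.IsSymm
  rw [Matrix.transpose_nonsing_inv, hM.eq]

-- constancy on connected open set from vanishing fderiv
lemma myConst {U : Set (Fin 3 → ℝ)} (hU : IsOpen U) (hUc : IsPreconnected U)
    {h : (Fin 3 → ℝ) → ℝ} (hd : ∀ x ∈ U, HasFDerivAt h (0 : (Fin 3 → ℝ) →L[ℝ] ℝ) x) :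
    ∀ x ∈ U, ∀ y ∈ U, h x = h y := by
  have hloc : ∀ x ∈ U, ∃ δ > 0, Metric.ball x δ ⊆ U ∧ ∀ y ∈ Metric.ball x δ, h y = h x := by
    intro x hx
    obtain ⟨δ, hδ, hball⟩ := Metric.isOpen_iff.1 hU x hx
    refine ⟨δ, hδ, hball, fun y hy => ?_⟩
    refine (convex_ball x δ).is_const_of_fderivWithin_eq_zero
      (fun z hz => (hd z (hball hz)).differentiableAt.differentiableWithinAt) ?_ hy
      (Metric.mem_ball_self hδ)
    intro z hz
    rw [fderivWithin_eq_fderiv (Metric.isOpen_ball.uniqueDiffWithinAt hz)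
      (hd z (hball hz)).differentiableAt]
    exact (hd z (hball hz)).fderiv
  intro x hx y hy
  set u : Set (Fin 3 → ℝ) := {z | z ∈ U ∧ h z = h x} with hu
  set v : Set (Fin 3 → ℝ) := {z | z ∈ U ∧ h z ≠ h x} with hv
  have huo : IsOpen u := by
    rw [Metric.isOpen_iff]
    intro z hz
    obtain ⟨δ, hδ, hbU, hconst⟩ := hloc z hz.1
    exact ⟨δ, hδ, fun y' hy' => ⟨hbU hy', (hconst y' hy').trans hz.2⟩⟩
  have hvo : IsOpen v := by
    rw [Metric.isOpen_iff]
    intro z hz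
    obtain ⟨δ, hδ, hbU, hconst⟩ := hloc z hz.1
    exact ⟨δ, hδ, fun y' hy' => ⟨hbU hy', (hconst y' hy').symm ▸ hz.2⟩⟩
  have hsub : U ⊆ u ∪ v := by
    intro z hz
    by_cases hc : h z = h x
    · exact Or.inl ⟨hz, hc⟩
    · exact Or.inr ⟨hz, hc⟩
  have hdis : Disjoint u v := by
    rw [Set.disjoint_iff]
    rintro z ⟨⟨_, h1⟩, ⟨_, h2⟩⟩
    exact absurd h1 h2
  have := hUc.subset_left_of_subset_union huo hvo hdis hsub ⟨x, hx, ⟨hx, rfl⟩⟩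
  exact ((this hy).2).symm


lemma myBoundMul {a wa b wb : ℝ} (ha : |a| ≤ wa) (hb : |b| ≤ wb) : |a * b| ≤ wa * wb := by
  rw [abs_mul]
  exact mul_le_mul ha hb (abs_nonneg _) ((abs_nonneg a).trans ha)

lemma myDotBound (u v : Fin 3 → ℝ) : |u ⬝ᵥ v| ≤ 3 * ‖u‖ * ‖v‖ := by
  have h : ∀ i : Fin 3, |u i * v i| ≤ ‖u‖ * ‖v‖ := by
    intro i
    rw [abs_mul]
    exact mul_le_mul (by simpa using norm_le_pi_norm u i) (by simpa using norm_le_pi_norm v i)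
      (abs_nonneg _) (norm_nonneg _)
  calc |u ⬝ᵥ v| ≤ ∑ i, |u i * v i| := by
        simpa [dotProduct] using Finset.abs_sum_le_sum_abs (fun i => u i * v i) Finset.univ
    _ ≤ ∑ _i : Fin 3, ‖u‖ * ‖v‖ := Finset.sum_le_sum fun i _ => h i
    _ = 3 * ‖u‖ * ‖v‖ := by simp [Fin.sum_univ_three]; ring

lemma myDotBound' {u v : Fin 3 → ℝ} {Cu Cv : ℝ} (hu : ‖u‖ ≤ Cu) (hv : ‖v‖ ≤ Cv) :
    |u ⬝ᵥ v| ≤ 3 * Cu * Cv := by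
  refine le_trans (myDotBound u v) ?_
  nlinarith [norm_nonneg u, norm_nonneg v]

lemma myQuadBound {M : Matrix (Fin 3) (Fin 3) ℝ} {CM : ℝ} (hM : ∀ i j, |M i j| ≤ CM)
    {u v : Fin 3 → ℝ} {Cu Cv : ℝ} (hu : ‖u‖ ≤ Cu) (hv : ‖v‖ ≤ Cv) :
    |u ⬝ᵥ (M *ᵥ v)| ≤ 9 * CM * Cu * Cv := by
  have hCM : 0 ≤ CM := le_trans (abs_nonneg _) (hM 0 0)
  have h : ∀ i j : Fin 3, |u i * (M i j * v j)| ≤ Cu * (CM * Cv) := by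
    intro i j
    rw [abs_mul, abs_mul]
    have h1 : |u i| ≤ Cu := le_trans (by simpa using norm_le_pi_norm u i) hu
    have h2 : |v j| ≤ Cv := le_trans (by simpa using norm_le_pi_norm v j) hv
    have h3 : |M i j| * |v j| ≤ CM * Cv :=
      mul_le_mul (hM i j) h2 (abs_nonneg _) hCM
    exact mul_le_mul h1 h3 (by positivity) ((abs_nonneg _).trans h1)
  calc |u ⬝ᵥ (M *ᵥ v)| = |∑ i, ∑ j, u i * (M i j * v j)| := by
        simp [dotProduct, Matrix.mulVec, Finset.mul_sum]
    _ ≤ ∑ i, |∑ j, u i * (M i j * v j)| := Finset.abs_sum_le_sum_abs _ _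
    _ ≤ ∑ i : Fin 3, ∑ j : Fin 3, |u i * (M i j * v j)| :=
        Finset.sum_le_sum fun i _ => Finset.abs_sum_le_sum_abs _ _
    _ ≤ ∑ _i : Fin 3, ∑ _j : Fin 3, Cu * (CM * Cv) :=
        Finset.sum_le_sum fun i _ => Finset.sum_le_sum fun j _ => h i j
    _ = 9 * CM * Cu * Cv := by simp [Fin.sum_univ_three]; ring

lemma myContDot {α : Type*} [TopologicalSpace α] {A : Set α} {u v : α → Fin 3 → ℝ}
    (hu : ContinuousOn u A) (hv : ContinuousOn v A) :
    ContinuousOn (fun p => u p ⬝ᵥ v p) A := by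
  simp only [dotProduct]
  apply continuousOn_finset_sum
  intro i _
  exact ((continuous_apply i).comp_continuousOn hu).mul ((continuous_apply i).comp_continuousOn hv)

lemma myContQuad {α : Type*} [TopologicalSpace α] {A : Set α}
    {M : α → Matrix (Fin 3) (Fin 3) ℝ} (hM : ∀ i j, ContinuousOn (fun p => M p i j) A)
    {u v : α → Fin 3 → ℝ} (hu : ContinuousOn u A) (hv : ContinuousOn v A) :
    ContinuousOn (fun p => u p ⬝ᵥ (M p *ᵥ v p)) A := by
  simp only [dotProduct, Matrix.mulVec]
  apply continuousOn_finset_sum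
  intro i _
  refine ((continuous_apply i).comp_continuousOn hu).mul ?_
  apply continuousOn_finset_sum
  intro j _
  exact (hM i j).mul ((continuous_apply j).comp_continuousOn hv)

lemma myDerivUnique {E : Type*} [NormedAddCommGroup E] [NormedSpace ℝ E]
    {f : ℝ → E} {T t : ℝ} (hT : 0 < T) (ht : t ∈ Icc (0:ℝ) T) {va vb : E}
    (h1 : HasDerivWithinAt f va (Icc (0:ℝ) T) t) (h2 : HasDerivWithinAt f vb (Icc (0:ℝ) T) t) :
    va = vb := by
  have := (uniqueDiffOn_Icc hT t ht).eq h1.hasFDerivWithinAt h2.hasFDerivWithinAt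
  have := congrFun (congrArg DFunLike.coe this) 1
  simpa using this

/-- The continuous linear map `v ↦ g · v` associated with a gradient vector `g`;
`HasFDerivAt q (gradCLM g) x` says `g` is the spatial gradient of `q` at `x`. -/
noncomputable def gradCLM (g : Fin 3 → ℝ) : (Fin 3 → ℝ) →L[ℝ] ℝ :=
  ∑ j : Fin 3, g j • (ContinuousLinearMap.proj j : (Fin 3 → ℝ) →L[ℝ] ℝ)

/-- The homogeneous double porosity/permeability (DPP) difference system on a bounded open
domain `Ω ⊆ ℝ³` and time interval `[0,T]`, together with all the regularity assumptions and
the boundary-condition encodings (H1)–(H2) described in the paper.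

Fields `w₁, w₂` (velocity differences) and `q₁, q₂` (pressure differences) satisfy
`(γ/φᵢ) ∂wᵢ/∂t + μ Kᵢ⁻¹ wᵢ + ∇qᵢ = 0`, `div w₁ = −(β/μ)(q₁−q₂)`, `div w₂ = +(β/μ)(q₁−q₂)`.
The time derivatives `dwᵢ, dqᵢ`, the spatial gradients `gqᵢ`, and the spatial Jacobians
`Jwᵢ, Jdwᵢ` (whose traces are the divergences of `wᵢ` and of `∂wᵢ/∂t`) are carried as data,
tied to the fields by `HasDerivWithinAt`/`HasFDerivAt` hypotheses. The hypothesis `leibniz`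
expresses that differentiation in `t` under the integral over `Ω` is valid (for continuous
bounded integrands with continuous bounded time derivatives). -/
structure DPP where
  Ω : Set (Fin 3 → ℝ)
  hΩopen : IsOpen Ω
  hΩbdd : Bornology.IsBounded Ω
  T : ℝ
  hT : 0 < T
  γ : ℝ
  μ : ℝ
  β : ℝ
  hγ : 0 < γ
  hμ : 0 < μ
  hβ : 0 < β
  φ₁ : (Fin 3 → ℝ) → ℝ
  φ₂ : (Fin 3 → ℝ) → ℝ
  hφ₁pos : ∀ x ∈ Ω, 0 < φ₁ x
  hφ₂pos : ∀ x ∈ Ω, 0 < φ₂ x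
  hφ₁cont : ContinuousOn φ₁ Ω
  hφ₂cont : ContinuousOn φ₂ Ω
  hφ₁bdd : ∃ c > (0:ℝ), ∃ C : ℝ, ∀ x ∈ Ω, c ≤ φ₁ x ∧ φ₁ x ≤ C
  hφ₂bdd : ∃ c > (0:ℝ), ∃ C : ℝ, ∀ x ∈ Ω, c ≤ φ₂ x ∧ φ₂ x ≤ C
  K₁ : (Fin 3 → ℝ) → Matrix (Fin 3) (Fin 3) ℝ
  K₂ : (Fin 3 → ℝ) → Matrix (Fin 3) (Fin 3) ℝ
  hK₁symm : ∀ x ∈ Ω, (K₁ x).IsSymm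
  hK₂symm : ∀ x ∈ Ω, (K₂ x).IsSymm
  hK₁pd : ∀ x ∈ Ω, (K₁ x).PosDef
  hK₂pd : ∀ x ∈ Ω, (K₂ x).PosDef
  hK₁invcont : ∀ i j, ContinuousOn (fun x => (K₁ x)⁻¹ i j) Ω
  hK₂invcont : ∀ i j, ContinuousOn (fun x => (K₂ x)⁻¹ i j) Ω
  hK₁invbdd : ∃ C : ℝ, ∀ x ∈ Ω, ∀ i j, |(K₁ x)⁻¹ i j| ≤ C
  hK₂invbdd : ∃ C : ℝ, ∀ x ∈ Ω, ∀ i j, |(K₂ x)⁻¹ i j| ≤ C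
  -- the fields of the difference system
  w₁ : (Fin 3 → ℝ) → ℝ → (Fin 3 → ℝ)
  w₂ : (Fin 3 → ℝ) → ℝ → (Fin 3 → ℝ)
  q₁ : (Fin 3 → ℝ) → ℝ → ℝ
  q₂ : (Fin 3 → ℝ) → ℝ → ℝ
  -- derivative data: time derivatives, spatial gradients, spatial Jacobians
  dw₁ : (Fin 3 → ℝ) → ℝ → (Fin 3 → ℝ)
  dw₂ : (Fin 3 → ℝ) → ℝ → (Fin 3 → ℝ)
  dq₁ : (Fin 3 → ℝ) → ℝ → ℝ
  dq₂ : (Fin 3 → ℝ) → ℝ → ℝ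
  gq₁ : (Fin 3 → ℝ) → ℝ → (Fin 3 → ℝ)
  gq₂ : (Fin 3 → ℝ) → ℝ → (Fin 3 → ℝ)
  Jw₁ : (Fin 3 → ℝ) → ℝ → ((Fin 3 → ℝ) →L[ℝ] (Fin 3 → ℝ))
  Jw₂ : (Fin 3 → ℝ) → ℝ → ((Fin 3 → ℝ) →L[ℝ] (Fin 3 → ℝ))
  Jdw₁ : (Fin 3 → ℝ) → ℝ → ((Fin 3 → ℝ) →L[ℝ] (Fin 3 → ℝ))
  Jdw₂ : (Fin 3 → ℝ) → ℝ → ((Fin 3 → ℝ) →L[ℝ] (Fin 3 → ℝ))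
  -- C¹ regularity in time: the data are the actual derivatives
  hdw₁ : ∀ x ∈ Ω, ∀ t ∈ Icc (0:ℝ) T, HasDerivWithinAt (w₁ x) (dw₁ x t) (Icc (0:ℝ) T) t
  hdw₂ : ∀ x ∈ Ω, ∀ t ∈ Icc (0:ℝ) T, HasDerivWithinAt (w₂ x) (dw₂ x t) (Icc (0:ℝ) T) t
  hdq₁ : ∀ x ∈ Ω, ∀ t ∈ Icc (0:ℝ) T, HasDerivWithinAt (q₁ x) (dq₁ x t) (Icc (0:ℝ) T) t
  hdq₂ : ∀ x ∈ Ω, ∀ t ∈ Icc (0:ℝ) T, HasDerivWithinAt (q₂ x) (dq₂ x t) (Icc (0:ℝ) T) t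
  -- C¹ regularity in space: gradients and Jacobians
  hgq₁ : ∀ t ∈ Icc (0:ℝ) T, ∀ x ∈ Ω, HasFDerivAt (fun y => q₁ y t) (gradCLM (gq₁ x t)) x
  hgq₂ : ∀ t ∈ Icc (0:ℝ) T, ∀ x ∈ Ω, HasFDerivAt (fun y => q₂ y t) (gradCLM (gq₂ x t)) x
  hJw₁ : ∀ t ∈ Icc (0:ℝ) T, ∀ x ∈ Ω, HasFDerivAt (fun y => w₁ y t) (Jw₁ x t) x
  hJw₂ : ∀ t ∈ Icc (0:ℝ) T, ∀ x ∈ Ω, HasFDerivAt (fun y => w₂ y t) (Jw₂ x t) x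
  hJdw₁ : ∀ t ∈ Icc (0:ℝ) T, ∀ x ∈ Ω, HasFDerivAt (fun y => dw₁ y t) (Jdw₁ x t) x
  hJdw₂ : ∀ t ∈ Icc (0:ℝ) T, ∀ x ∈ Ω, HasFDerivAt (fun y => dw₂ y t) (Jdw₂ x t) x
  -- `div (∂wᵢ/∂t) = ∂(div wᵢ)/∂t`
  hdivcomm₁ : ∀ x ∈ Ω, ∀ t ∈ Icc (0:ℝ) T,
    HasDerivWithinAt (fun s => divOf (Jw₁ x s)) (divOf (Jdw₁ x t)) (Icc (0:ℝ) T) t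
  hdivcomm₂ : ∀ x ∈ Ω, ∀ t ∈ Icc (0:ℝ) T,
    HasDerivWithinAt (fun s => divOf (Jw₂ x s)) (divOf (Jdw₂ x t)) (Icc (0:ℝ) T) t
  -- joint continuity of the fields and of their appearing first derivatives
  hw₁cont : ContinuousOn (fun p : (Fin 3 → ℝ) × ℝ => w₁ p.1 p.2) (Ω ×ˢ Icc (0:ℝ) T)
  hw₂cont : ContinuousOn (fun p : (Fin 3 → ℝ) × ℝ => w₂ p.1 p.2) (Ω ×ˢ Icc (0:ℝ) T)
  hq₁cont : ContinuousOn (fun p : (Fin 3 → ℝ) × ℝ => q₁ p.1 p.2) (Ω ×ˢ Icc (0:ℝ) T)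
  hq₂cont : ContinuousOn (fun p : (Fin 3 → ℝ) × ℝ => q₂ p.1 p.2) (Ω ×ˢ Icc (0:ℝ) T)
  hdw₁cont : ContinuousOn (fun p : (Fin 3 → ℝ) × ℝ => dw₁ p.1 p.2) (Ω ×ˢ Icc (0:ℝ) T)
  hdw₂cont : ContinuousOn (fun p : (Fin 3 → ℝ) × ℝ => dw₂ p.1 p.2) (Ω ×ˢ Icc (0:ℝ) T)
  hdq₁cont : ContinuousOn (fun p : (Fin 3 → ℝ) × ℝ => dq₁ p.1 p.2) (Ω ×ˢ Icc (0:ℝ) T)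
  hdq₂cont : ContinuousOn (fun p : (Fin 3 → ℝ) × ℝ => dq₂ p.1 p.2) (Ω ×ˢ Icc (0:ℝ) T)
  hgq₁cont : ContinuousOn (fun p : (Fin 3 → ℝ) × ℝ => gq₁ p.1 p.2) (Ω ×ˢ Icc (0:ℝ) T)
  hgq₂cont : ContinuousOn (fun p : (Fin 3 → ℝ) × ℝ => gq₂ p.1 p.2) (Ω ×ˢ Icc (0:ℝ) T)
  hdivw₁cont : ContinuousOn (fun p : (Fin 3 → ℝ) × ℝ => divOf (Jw₁ p.1 p.2)) (Ω ×ˢ Icc (0:ℝ) T)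
  hdivw₂cont : ContinuousOn (fun p : (Fin 3 → ℝ) × ℝ => divOf (Jw₂ p.1 p.2)) (Ω ×ˢ Icc (0:ℝ) T)
  hdivdw₁cont : ContinuousOn (fun p : (Fin 3 → ℝ) × ℝ => divOf (Jdw₁ p.1 p.2)) (Ω ×ˢ Icc (0:ℝ) T)
  hdivdw₂cont : ContinuousOn (fun p : (Fin 3 → ℝ) × ℝ => divOf (Jdw₂ p.1 p.2)) (Ω ×ˢ Icc (0:ℝ) T)
  -- boundedness of the fields and of their appearing first derivatives
  hw₁bdd : ∃ C : ℝ, ∀ x ∈ Ω, ∀ t ∈ Icc (0:ℝ) T, ‖w₁ x t‖ ≤ C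
  hw₂bdd : ∃ C : ℝ, ∀ x ∈ Ω, ∀ t ∈ Icc (0:ℝ) T, ‖w₂ x t‖ ≤ C
  hq₁bdd : ∃ C : ℝ, ∀ x ∈ Ω, ∀ t ∈ Icc (0:ℝ) T, |q₁ x t| ≤ C
  hq₂bdd : ∃ C : ℝ, ∀ x ∈ Ω, ∀ t ∈ Icc (0:ℝ) T, |q₂ x t| ≤ C
  hdw₁bdd : ∃ C : ℝ, ∀ x ∈ Ω, ∀ t ∈ Icc (0:ℝ) T, ‖dw₁ x t‖ ≤ C
  hdw₂bdd : ∃ C : ℝ, ∀ x ∈ Ω, ∀ t ∈ Icc (0:ℝ) T, ‖dw₂ x t‖ ≤ C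
  hdq₁bdd : ∃ C : ℝ, ∀ x ∈ Ω, ∀ t ∈ Icc (0:ℝ) T, |dq₁ x t| ≤ C
  hdq₂bdd : ∃ C : ℝ, ∀ x ∈ Ω, ∀ t ∈ Icc (0:ℝ) T, |dq₂ x t| ≤ C
  hgq₁bdd : ∃ C : ℝ, ∀ x ∈ Ω, ∀ t ∈ Icc (0:ℝ) T, ‖gq₁ x t‖ ≤ C
  hgq₂bdd : ∃ C : ℝ, ∀ x ∈ Ω, ∀ t ∈ Icc (0:ℝ) T, ‖gq₂ x t‖ ≤ C
  hdivw₁bdd : ∃ C : ℝ, ∀ x ∈ Ω, ∀ t ∈ Icc (0:ℝ) T, |divOf (Jw₁ x t)| ≤ C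
  hdivw₂bdd : ∃ C : ℝ, ∀ x ∈ Ω, ∀ t ∈ Icc (0:ℝ) T, |divOf (Jw₂ x t)| ≤ C
  hdivdw₁bdd : ∃ C : ℝ, ∀ x ∈ Ω, ∀ t ∈ Icc (0:ℝ) T, |divOf (Jdw₁ x t)| ≤ C
  hdivdw₂bdd : ∃ C : ℝ, ∀ x ∈ Ω, ∀ t ∈ Icc (0:ℝ) T, |divOf (Jdw₂ x t)| ≤ C
  -- the homogeneous DPP difference system
  pde₁ : ∀ x ∈ Ω, ∀ t ∈ Icc (0:ℝ) T,
    (γ / φ₁ x) • dw₁ x t + μ • ((K₁ x)⁻¹ *ᵥ w₁ x t) + gq₁ x t = 0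
  pde₂ : ∀ x ∈ Ω, ∀ t ∈ Icc (0:ℝ) T,
    (γ / φ₂ x) • dw₂ x t + μ • ((K₂ x)⁻¹ *ᵥ w₂ x t) + gq₂ x t = 0
  mass₁ : ∀ x ∈ Ω, ∀ t ∈ Icc (0:ℝ) T, divOf (Jw₁ x t) = -(β / μ) * (q₁ x t - q₂ x t)
  mass₂ : ∀ x ∈ Ω, ∀ t ∈ Icc (0:ℝ) T, divOf (Jw₂ x t) = (β / μ) * (q₁ x t - q₂ x t)
  -- boundary-condition encodings (H1)–(H2)
  H1₁ : ∀ t ∈ Icc (0:ℝ) T,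
    (∫ x in Ω, (w₁ x t ⬝ᵥ gq₁ x t + q₁ x t * divOf (Jw₁ x t))) = 0
  H1₂ : ∀ t ∈ Icc (0:ℝ) T,
    (∫ x in Ω, (w₂ x t ⬝ᵥ gq₂ x t + q₂ x t * divOf (Jw₂ x t))) = 0
  H2₁ : ∀ t ∈ Icc (0:ℝ) T,
    (∫ x in Ω, (dw₁ x t ⬝ᵥ gq₁ x t + q₁ x t * divOf (Jdw₁ x t))) = 0
  H2₂ : ∀ t ∈ Icc (0:ℝ) T,
    (∫ x in Ω, (dw₂ x t ⬝ᵥ gq₂ x t + q₂ x t * divOf (Jdw₂ x t))) = 0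
  -- differentiation in `t` under the integral over `Ω` is valid
  leibniz : ∀ F F' : (Fin 3 → ℝ) → ℝ → ℝ,
    (∀ x ∈ Ω, ∀ t ∈ Icc (0:ℝ) T, HasDerivWithinAt (F x) (F' x t) (Icc (0:ℝ) T) t) →
    ContinuousOn (fun p : (Fin 3 → ℝ) × ℝ => F p.1 p.2) (Ω ×ˢ Icc (0:ℝ) T) →
    ContinuousOn (fun p : (Fin 3 → ℝ) × ℝ => F' p.1 p.2) (Ω ×ˢ Icc (0:ℝ) T) →
    (∃ C : ℝ, ∀ x ∈ Ω, ∀ t ∈ Icc (0:ℝ) T, |F x t| ≤ C) →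
    (∃ C : ℝ, ∀ x ∈ Ω, ∀ t ∈ Icc (0:ℝ) T, |F' x t| ≤ C) →
    ∀ t ∈ Icc (0:ℝ) T,
      HasDerivWithinAt (fun s => ∫ x in Ω, F x s) (∫ x in Ω, F' x t) (Icc (0:ℝ) T) t

/-- The (kinetic) energy `E(t) = ∫_Ω [ γ/(2φ₁) |w₁|² + γ/(2φ₂) |w₂|² ] dx` of the
difference system. -/
noncomputable def DPP.E (S : DPP) : ℝ → ℝ := fun t =>
  ∫ x in S.Ω, ((S.γ / (2 * S.φ₁ x)) * (S.w₁ x t ⬝ᵥ S.w₁ x t)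
    + (S.γ / (2 * S.φ₂ x)) * (S.w₂ x t ⬝ᵥ S.w₂ x t))


/-! ### Auxiliary integrands and their properties -/

noncomputable def IE (S : DPP) (x : Fin 3 → ℝ) (t : ℝ) : ℝ :=
  (S.γ / (2 * S.φ₁ x)) * (S.w₁ x t ⬝ᵥ S.w₁ x t) + (S.γ / (2 * S.φ₂ x)) * (S.w₂ x t ⬝ᵥ S.w₂ x t)

noncomputable def Ig (S : DPP) (x : Fin 3 → ℝ) (t : ℝ) : ℝ :=
  (S.γ / S.φ₁ x) * (S.w₁ x t ⬝ᵥ S.dw₁ x t) + (S.γ / S.φ₂ x) * (S.w₂ x t ⬝ᵥ S.dw₂ x t)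

noncomputable def IR (S : DPP) (x : Fin 3 → ℝ) (t : ℝ) : ℝ :=
  (S.γ / S.φ₁ x) * (S.dw₁ x t ⬝ᵥ S.dw₁ x t) + (S.γ / S.φ₂ x) * (S.dw₂ x t ⬝ᵥ S.dw₂ x t)

noncomputable def ID (S : DPP) (x : Fin 3 → ℝ) (t : ℝ) : ℝ :=
  S.μ * (S.w₁ x t ⬝ᵥ ((S.K₁ x)⁻¹ *ᵥ S.w₁ x t)) + S.μ * (S.w₂ x t ⬝ᵥ ((S.K₂ x)⁻¹ *ᵥ S.w₂ x t))
    + (S.β / S.μ) * ((S.q₁ x t - S.q₂ x t) * (S.q₁ x t - S.q₂ x t))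

noncomputable def IDd (S : DPP) (x : Fin 3 → ℝ) (t : ℝ) : ℝ :=
  2 * S.μ * (S.dw₁ x t ⬝ᵥ ((S.K₁ x)⁻¹ *ᵥ S.w₁ x t))
    + 2 * S.μ * (S.dw₂ x t ⬝ᵥ ((S.K₂ x)⁻¹ *ᵥ S.w₂ x t))
    + 2 * (S.β / S.μ) * ((S.q₁ x t - S.q₂ x t) * (S.dq₁ x t - S.dq₂ x t))

noncomputable def B11 (S : DPP) (x : Fin 3 → ℝ) (t : ℝ) : ℝ :=
  S.w₁ x t ⬝ᵥ S.gq₁ x t + S.q₁ x t * divOf (S.Jw₁ x t)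

noncomputable def B12 (S : DPP) (x : Fin 3 → ℝ) (t : ℝ) : ℝ :=
  S.w₂ x t ⬝ᵥ S.gq₂ x t + S.q₂ x t * divOf (S.Jw₂ x t)

noncomputable def B21 (S : DPP) (x : Fin 3 → ℝ) (t : ℝ) : ℝ :=
  S.dw₁ x t ⬝ᵥ S.gq₁ x t + S.q₁ x t * divOf (S.Jdw₁ x t)

noncomputable def B22 (S : DPP) (x : Fin 3 → ℝ) (t : ℝ) : ℝ :=
  S.dw₂ x t ⬝ᵥ S.gq₂ x t + S.q₂ x t * divOf (S.Jdw₂ x t)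

section AuxLemmas

variable (S : DPP)


lemma myFix {F : (Fin 3 → ℝ) → ℝ → ℝ}
    (h : ContinuousOn (fun p : (Fin 3 → ℝ) × ℝ => F p.1 p.2) (S.Ω ×ˢ Icc (0:ℝ) S.T)) {t : ℝ}
    (ht : t ∈ Icc (0:ℝ) S.T) : ContinuousOn (fun x => F x t) S.Ω :=
  h.comp (continuous_id.prodMk continuous_const).continuousOn (fun x hx => ⟨hx, ht⟩)

-- continuity building blocks on the product set
lemma contW1 : ContinuousOn (fun p : (Fin 3 → ℝ) × ℝ => S.w₁ p.1 p.2) (S.Ω ×ˢ Icc (0:ℝ) S.T) := S.hw₁cont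
lemma contA1 : ContinuousOn (fun p : (Fin 3 → ℝ) × ℝ => S.γ / S.φ₁ p.1) (S.Ω ×ˢ Icc (0:ℝ) S.T) :=
  continuousOn_const.div (S.hφ₁cont.comp continuous_fst.continuousOn fun p hp => hp.1)
    fun p hp => (S.hφ₁pos _ hp.1).ne'
lemma contA2 : ContinuousOn (fun p : (Fin 3 → ℝ) × ℝ => S.γ / S.φ₂ p.1) (S.Ω ×ˢ Icc (0:ℝ) S.T) :=
  continuousOn_const.div (S.hφ₂cont.comp continuous_fst.continuousOn fun p hp => hp.1)
    fun p hp => (S.hφ₂pos _ hp.1).ne'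
lemma contA1' : ContinuousOn (fun p : (Fin 3 → ℝ) × ℝ => S.γ / (2 * S.φ₁ p.1)) (S.Ω ×ˢ Icc (0:ℝ) S.T) :=
  continuousOn_const.div
    (continuousOn_const.mul (S.hφ₁cont.comp continuous_fst.continuousOn fun p hp => hp.1))
    fun p hp => by have := S.hφ₁pos _ hp.1; positivity
lemma contA2' : ContinuousOn (fun p : (Fin 3 → ℝ) × ℝ => S.γ / (2 * S.φ₂ p.1)) (S.Ω ×ˢ Icc (0:ℝ) S.T) :=
  continuousOn_const.div
    (continuousOn_const.mul (S.hφ₂cont.comp continuous_fst.continuousOn fun p hp => hp.1))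
    fun p hp => by have := S.hφ₂pos _ hp.1; positivity

lemma contIE : ContinuousOn (fun p : (Fin 3 → ℝ) × ℝ => IE S p.1 p.2) (S.Ω ×ˢ Icc (0:ℝ) S.T) := by
  unfold IE
  exact ((contA1' S).mul (myContDot S.hw₁cont S.hw₁cont)).add
    ((contA2' S).mul (myContDot S.hw₂cont S.hw₂cont))

lemma contIg : ContinuousOn (fun p : (Fin 3 → ℝ) × ℝ => Ig S p.1 p.2) (S.Ω ×ˢ Icc (0:ℝ) S.T) := by
  unfold Ig
  exact ((contA1 S).mul (myContDot S.hw₁cont S.hdw₁cont)).add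
    ((contA2 S).mul (myContDot S.hw₂cont S.hdw₂cont))

lemma contIR : ContinuousOn (fun p : (Fin 3 → ℝ) × ℝ => IR S p.1 p.2) (S.Ω ×ˢ Icc (0:ℝ) S.T) := by
  unfold IR
  exact ((contA1 S).mul (myContDot S.hdw₁cont S.hdw₁cont)).add
    ((contA2 S).mul (myContDot S.hdw₂cont S.hdw₂cont))

lemma contID : ContinuousOn (fun p : (Fin 3 → ℝ) × ℝ => ID S p.1 p.2) (S.Ω ×ˢ Icc (0:ℝ) S.T) := by
  unfold ID
  refine ((continuousOn_const.mul (myContQuad ?_ S.hw₁cont S.hw₁cont)).add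
    (continuousOn_const.mul (myContQuad ?_ S.hw₂cont S.hw₂cont))).add
    (continuousOn_const.mul ((S.hq₁cont.sub S.hq₂cont).mul (S.hq₁cont.sub S.hq₂cont)))
  · exact fun i j => (S.hK₁invcont i j).comp continuous_fst.continuousOn fun p hp => hp.1
  · exact fun i j => (S.hK₂invcont i j).comp continuous_fst.continuousOn fun p hp => hp.1

lemma contIDd : ContinuousOn (fun p : (Fin 3 → ℝ) × ℝ => IDd S p.1 p.2) (S.Ω ×ˢ Icc (0:ℝ) S.T) := by
  unfold IDd
  refine ((continuousOn_const.mul (myContQuad ?_ S.hdw₁cont S.hw₁cont)).add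
    (continuousOn_const.mul (myContQuad ?_ S.hdw₂cont S.hw₂cont))).add
    (continuousOn_const.mul ((S.hq₁cont.sub S.hq₂cont).mul (S.hdq₁cont.sub S.hdq₂cont)))
  · exact fun i j => (S.hK₁invcont i j).comp continuous_fst.continuousOn fun p hp => hp.1
  · exact fun i j => (S.hK₂invcont i j).comp continuous_fst.continuousOn fun p hp => hp.1

lemma contB11 : ContinuousOn (fun p : (Fin 3 → ℝ) × ℝ => B11 S p.1 p.2) (S.Ω ×ˢ Icc (0:ℝ) S.T) := by
  unfold B11
  exact (myContDot S.hw₁cont S.hgq₁cont).add (S.hq₁cont.mul S.hdivw₁cont)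

lemma contB12 : ContinuousOn (fun p : (Fin 3 → ℝ) × ℝ => B12 S p.1 p.2) (S.Ω ×ˢ Icc (0:ℝ) S.T) := by
  unfold B12
  exact (myContDot S.hw₂cont S.hgq₂cont).add (S.hq₂cont.mul S.hdivw₂cont)

lemma contB21 : ContinuousOn (fun p : (Fin 3 → ℝ) × ℝ => B21 S p.1 p.2) (S.Ω ×ˢ Icc (0:ℝ) S.T) := by
  unfold B21
  exact (myContDot S.hdw₁cont S.hgq₁cont).add (S.hq₁cont.mul S.hdivdw₁cont)

lemma contB22 : ContinuousOn (fun p : (Fin 3 → ℝ) × ℝ => B22 S p.1 p.2) (S.Ω ×ˢ Icc (0:ℝ) S.T) := by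
  unfold B22
  exact (myContDot S.hdw₂cont S.hgq₂cont).add (S.hq₂cont.mul S.hdivdw₂cont)

end AuxLemmas


lemma myWeightBound {γ c φx : ℝ} (hγ : 0 < γ) (hc : 0 < c) (hφ : c ≤ φx) : |γ / φx| ≤ γ / c := by
  have hφpos : 0 < φx := lt_of_lt_of_le hc hφ
  rw [abs_of_pos (div_pos hγ hφpos)]
  gcongr

section AuxLemmas2

variable (S : DPP)

lemma bddIE : ∃ C : ℝ, ∀ x ∈ S.Ω, ∀ t ∈ Icc (0:ℝ) S.T, |IE S x t| ≤ C := by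
  obtain ⟨c₁, hc₁, C₁, hb₁⟩ := S.hφ₁bdd
  obtain ⟨c₂, hc₂, C₂, hb₂⟩ := S.hφ₂bdd
  obtain ⟨Cw₁, hCw₁⟩ := S.hw₁bdd
  obtain ⟨Cw₂, hCw₂⟩ := S.hw₂bdd
  refine ⟨S.γ / (2 * c₁) * (3 * Cw₁ * Cw₁) + S.γ / (2 * c₂) * (3 * Cw₂ * Cw₂), fun x hx t ht => ?_⟩
  refine le_trans (abs_add_le _ _) (add_le_add ?_ ?_)
  · exact myBoundMul (myWeightBound S.hγ (by linarith) (by linarith [(hb₁ x hx).1]))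
      (myDotBound' (hCw₁ x hx t ht) (hCw₁ x hx t ht))
  · exact myBoundMul (myWeightBound S.hγ (by linarith) (by linarith [(hb₂ x hx).1]))
      (myDotBound' (hCw₂ x hx t ht) (hCw₂ x hx t ht))

lemma bddIg : ∃ C : ℝ, ∀ x ∈ S.Ω, ∀ t ∈ Icc (0:ℝ) S.T, |Ig S x t| ≤ C := by
  obtain ⟨c₁, hc₁, C₁, hb₁⟩ := S.hφ₁bdd
  obtain ⟨c₂, hc₂, C₂, hb₂⟩ := S.hφ₂bdd
  obtain ⟨Cw₁, hCw₁⟩ := S.hw₁bdd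
  obtain ⟨Cw₂, hCw₂⟩ := S.hw₂bdd
  obtain ⟨Cd₁, hCd₁⟩ := S.hdw₁bdd
  obtain ⟨Cd₂, hCd₂⟩ := S.hdw₂bdd
  refine ⟨S.γ / c₁ * (3 * Cw₁ * Cd₁) + S.γ / c₂ * (3 * Cw₂ * Cd₂), fun x hx t ht => ?_⟩
  refine le_trans (abs_add_le _ _) (add_le_add ?_ ?_)
  · exact myBoundMul (myWeightBound S.hγ hc₁ (hb₁ x hx).1)
      (myDotBound' (hCw₁ x hx t ht) (hCd₁ x hx t ht))
  · exact myBoundMul (myWeightBound S.hγ hc₂ (hb₂ x hx).1)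
      (myDotBound' (hCw₂ x hx t ht) (hCd₂ x hx t ht))

lemma bddIR : ∃ C : ℝ, ∀ x ∈ S.Ω, ∀ t ∈ Icc (0:ℝ) S.T, |IR S x t| ≤ C := by
  obtain ⟨c₁, hc₁, C₁, hb₁⟩ := S.hφ₁bdd
  obtain ⟨c₂, hc₂, C₂, hb₂⟩ := S.hφ₂bdd
  obtain ⟨Cd₁, hCd₁⟩ := S.hdw₁bdd
  obtain ⟨Cd₂, hCd₂⟩ := S.hdw₂bdd
  refine ⟨S.γ / c₁ * (3 * Cd₁ * Cd₁) + S.γ / c₂ * (3 * Cd₂ * Cd₂), fun x hx t ht => ?_⟩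
  refine le_trans (abs_add_le _ _) (add_le_add ?_ ?_)
  · exact myBoundMul (myWeightBound S.hγ hc₁ (hb₁ x hx).1)
      (myDotBound' (hCd₁ x hx t ht) (hCd₁ x hx t ht))
  · exact myBoundMul (myWeightBound S.hγ hc₂ (hb₂ x hx).1)
      (myDotBound' (hCd₂ x hx t ht) (hCd₂ x hx t ht))

lemma bddID : ∃ C : ℝ, ∀ x ∈ S.Ω, ∀ t ∈ Icc (0:ℝ) S.T, |ID S x t| ≤ C := by
  obtain ⟨CK₁, hCK₁⟩ := S.hK₁invbdd
  obtain ⟨CK₂, hCK₂⟩ := S.hK₂invbdd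
  obtain ⟨Cw₁, hCw₁⟩ := S.hw₁bdd
  obtain ⟨Cw₂, hCw₂⟩ := S.hw₂bdd
  obtain ⟨Cq₁, hCq₁⟩ := S.hq₁bdd
  obtain ⟨Cq₂, hCq₂⟩ := S.hq₂bdd
  refine ⟨(S.μ * (9 * CK₁ * Cw₁ * Cw₁) + S.μ * (9 * CK₂ * Cw₂ * Cw₂))
    + S.β / S.μ * ((Cq₁ + Cq₂) * (Cq₁ + Cq₂)), fun x hx t ht => ?_⟩
  have hq : |S.q₁ x t - S.q₂ x t| ≤ Cq₁ + Cq₂ :=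
    le_trans (abs_sub _ _) (add_le_add (hCq₁ x hx t ht) (hCq₂ x hx t ht))
  refine le_trans (abs_add_le _ _) (add_le_add (le_trans (abs_add_le _ _) (add_le_add ?_ ?_)) ?_)
  · exact myBoundMul (le_of_eq (abs_of_pos S.hμ))
      (myQuadBound (fun i j => hCK₁ x hx i j) (hCw₁ x hx t ht) (hCw₁ x hx t ht))
  · exact myBoundMul (le_of_eq (abs_of_pos S.hμ))
      (myQuadBound (fun i j => hCK₂ x hx i j) (hCw₂ x hx t ht) (hCw₂ x hx t ht))
  · exact myBoundMul (le_of_eq (abs_of_pos (div_pos S.hβ S.hμ))) (myBoundMul hq hq)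

lemma bddIDd : ∃ C : ℝ, ∀ x ∈ S.Ω, ∀ t ∈ Icc (0:ℝ) S.T, |IDd S x t| ≤ C := by
  obtain ⟨CK₁, hCK₁⟩ := S.hK₁invbdd
  obtain ⟨CK₂, hCK₂⟩ := S.hK₂invbdd
  obtain ⟨Cw₁, hCw₁⟩ := S.hw₁bdd
  obtain ⟨Cw₂, hCw₂⟩ := S.hw₂bdd
  obtain ⟨Cd₁, hCd₁⟩ := S.hdw₁bdd
  obtain ⟨Cd₂, hCd₂⟩ := S.hdw₂bdd
  obtain ⟨Cq₁, hCq₁⟩ := S.hq₁bdd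
  obtain ⟨Cq₂, hCq₂⟩ := S.hq₂bdd
  obtain ⟨Cdq₁, hCdq₁⟩ := S.hdq₁bdd
  obtain ⟨Cdq₂, hCdq₂⟩ := S.hdq₂bdd
  refine ⟨((2 * S.μ) * (9 * CK₁ * Cd₁ * Cw₁) + (2 * S.μ) * (9 * CK₂ * Cd₂ * Cw₂))
    + (2 * (S.β / S.μ)) * ((Cq₁ + Cq₂) * (Cdq₁ + Cdq₂)), fun x hx t ht => ?_⟩
  have hq : |S.q₁ x t - S.q₂ x t| ≤ Cq₁ + Cq₂ :=
    le_trans (abs_sub _ _) (add_le_add (hCq₁ x hx t ht) (hCq₂ x hx t ht))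
  have hdq : |S.dq₁ x t - S.dq₂ x t| ≤ Cdq₁ + Cdq₂ :=
    le_trans (abs_sub _ _) (add_le_add (hCdq₁ x hx t ht) (hCdq₂ x hx t ht))
  have h2μ : |2 * S.μ| ≤ 2 * S.μ := le_of_eq (abs_of_pos (by linarith [S.hμ]))
  have h2β : |2 * (S.β / S.μ)| ≤ 2 * (S.β / S.μ) := by
    have := div_pos S.hβ S.hμ
    exact le_of_eq (abs_of_pos (by linarith))
  refine le_trans (abs_add_le _ _) (add_le_add (le_trans (abs_add_le _ _) (add_le_add ?_ ?_)) ?_)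
  · exact myBoundMul h2μ
      (myQuadBound (fun i j => hCK₁ x hx i j) (hCd₁ x hx t ht) (hCw₁ x hx t ht))
  · exact myBoundMul h2μ
      (myQuadBound (fun i j => hCK₂ x hx i j) (hCd₂ x hx t ht) (hCw₂ x hx t ht))
  · exact myBoundMul h2β (myBoundMul hq hdq)

lemma bddB (u g : ℝ → (Fin 3 → ℝ)) (qv dv : ℝ → ℝ)
    {Cu Cg Cq Cd : ℝ} (hu : ∀ t ∈ Icc (0:ℝ) S.T, ‖u t‖ ≤ Cu)
    (hg : ∀ t ∈ Icc (0:ℝ) S.T, ‖g t‖ ≤ Cg) (hq : ∀ t ∈ Icc (0:ℝ) S.T, |qv t| ≤ Cq)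
    (hd : ∀ t ∈ Icc (0:ℝ) S.T, |dv t| ≤ Cd) :
    ∀ t ∈ Icc (0:ℝ) S.T, |u t ⬝ᵥ g t + qv t * dv t| ≤ 3 * Cu * Cg + Cq * Cd := fun t ht =>
  le_trans (abs_add_le _ _) (add_le_add (myDotBound' (hu t ht) (hg t ht))
    (myBoundMul (hq t ht) (hd t ht)))

lemma bddB11 : ∃ C : ℝ, ∀ x ∈ S.Ω, ∀ t ∈ Icc (0:ℝ) S.T, |B11 S x t| ≤ C := by
  obtain ⟨Cw₁, hCw₁⟩ := S.hw₁bdd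
  obtain ⟨Cg₁, hCg₁⟩ := S.hgq₁bdd
  obtain ⟨Cq₁, hCq₁⟩ := S.hq₁bdd
  obtain ⟨Cv₁, hCv₁⟩ := S.hdivw₁bdd
  exact ⟨3 * Cw₁ * Cg₁ + Cq₁ * Cv₁, fun x hx => bddB S _ _ _ _
    (hCw₁ x hx) (hCg₁ x hx) (hCq₁ x hx) (hCv₁ x hx)⟩

lemma bddB12 : ∃ C : ℝ, ∀ x ∈ S.Ω, ∀ t ∈ Icc (0:ℝ) S.T, |B12 S x t| ≤ C := by
  obtain ⟨Cw₂, hCw₂⟩ := S.hw₂bdd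
  obtain ⟨Cg₂, hCg₂⟩ := S.hgq₂bdd
  obtain ⟨Cq₂, hCq₂⟩ := S.hq₂bdd
  obtain ⟨Cv₂, hCv₂⟩ := S.hdivw₂bdd
  exact ⟨3 * Cw₂ * Cg₂ + Cq₂ * Cv₂, fun x hx => bddB S _ _ _ _
    (hCw₂ x hx) (hCg₂ x hx) (hCq₂ x hx) (hCv₂ x hx)⟩

lemma bddB21 : ∃ C : ℝ, ∀ x ∈ S.Ω, ∀ t ∈ Icc (0:ℝ) S.T, |B21 S x t| ≤ C := by
  obtain ⟨Cd₁, hCd₁⟩ := S.hdw₁bdd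
  obtain ⟨Cg₁, hCg₁⟩ := S.hgq₁bdd
  obtain ⟨Cq₁, hCq₁⟩ := S.hq₁bdd
  obtain ⟨Cv₁, hCv₁⟩ := S.hdivdw₁bdd
  exact ⟨3 * Cd₁ * Cg₁ + Cq₁ * Cv₁, fun x hx => bddB S _ _ _ _
    (hCd₁ x hx) (hCg₁ x hx) (hCq₁ x hx) (hCv₁ x hx)⟩

lemma bddB22 : ∃ C : ℝ, ∀ x ∈ S.Ω, ∀ t ∈ Icc (0:ℝ) S.T, |B22 S x t| ≤ C := by
  obtain ⟨Cd₂, hCd₂⟩ := S.hdw₂bdd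
  obtain ⟨Cg₂, hCg₂⟩ := S.hgq₂bdd
  obtain ⟨Cq₂, hCq₂⟩ := S.hq₂bdd
  obtain ⟨Cv₂, hCv₂⟩ := S.hdivdw₂bdd
  exact ⟨3 * Cd₂ * Cg₂ + Cq₂ * Cv₂, fun x hx => bddB S _ _ _ _
    (hCd₂ x hx) (hCg₂ x hx) (hCq₂ x hx) (hCv₂ x hx)⟩

-- integrability glue
lemma myIntOn' {F : (Fin 3 → ℝ) → ℝ → ℝ}
    (hc : ContinuousOn (fun p : (Fin 3 → ℝ) × ℝ => F p.1 p.2) (S.Ω ×ˢ Icc (0:ℝ) S.T))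
    (hb : ∃ C : ℝ, ∀ x ∈ S.Ω, ∀ t ∈ Icc (0:ℝ) S.T, |F x t| ≤ C) {t : ℝ}
    (ht : t ∈ Icc (0:ℝ) S.T) : IntegrableOn (fun x => F x t) S.Ω := by
  obtain ⟨C, hC⟩ := hb
  exact myIntOn S.hΩopen.measurableSet S.hΩbdd (myFix S hc ht) (fun x hx => hC x hx t ht)

end AuxLemmas2


section AuxLemmas3

variable (S : DPP)

lemma derivIE : ∀ x ∈ S.Ω, ∀ t ∈ Icc (0:ℝ) S.T,
    HasDerivWithinAt (fun s => IE S x s) (Ig S x t) (Icc (0:ℝ) S.T) t := by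
  intro x hx t ht
  have h1 := (myDotDeriv (S.hdw₁ x hx t ht) (S.hdw₁ x hx t ht)).const_mul (S.γ / (2 * S.φ₁ x))
  have h2 := (myDotDeriv (S.hdw₂ x hx t ht) (S.hdw₂ x hx t ht)).const_mul (S.γ / (2 * S.φ₂ x))
  have h := h1.add h2
  have heq : S.γ / (2 * S.φ₁ x) * (S.dw₁ x t ⬝ᵥ S.w₁ x t + S.w₁ x t ⬝ᵥ S.dw₁ x t)
      + S.γ / (2 * S.φ₂ x) * (S.dw₂ x t ⬝ᵥ S.w₂ x t + S.w₂ x t ⬝ᵥ S.dw₂ x t) = Ig S x t := by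
    unfold Ig
    rw [dotProduct_comm (S.dw₁ x t) (S.w₁ x t), dotProduct_comm (S.dw₂ x t) (S.w₂ x t)]
    have hφ₁ := (S.hφ₁pos x hx).ne'
    have hφ₂ := (S.hφ₂pos x hx).ne'
    field_simp
    ring
  rw [← heq]
  exact h

lemma derivID : ∀ x ∈ S.Ω, ∀ t ∈ Icc (0:ℝ) S.T,
    HasDerivWithinAt (fun s => ID S x s) (IDd S x t) (Icc (0:ℝ) S.T) t := by
  intro x hx t ht
  have h1 := (myDotDeriv (S.hdw₁ x hx t ht)
    (myMulVecDeriv (S.K₁ x)⁻¹ (S.hdw₁ x hx t ht))).const_mul S.μ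
  have h2 := (myDotDeriv (S.hdw₂ x hx t ht)
    (myMulVecDeriv (S.K₂ x)⁻¹ (S.hdw₂ x hx t ht))).const_mul S.μ
  have hq := (((S.hdq₁ x hx t ht).sub (S.hdq₂ x hx t ht)).mul
    ((S.hdq₁ x hx t ht).sub (S.hdq₂ x hx t ht))).const_mul (S.β / S.μ)
  have h := (h1.add h2).add hq
  have hsym₁ : S.w₁ x t ⬝ᵥ ((S.K₁ x)⁻¹ *ᵥ S.dw₁ x t) = S.dw₁ x t ⬝ᵥ ((S.K₁ x)⁻¹ *ᵥ S.w₁ x t) :=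
    mySymmDot (mySymmInv (S.hK₁symm x hx)) _ _
  have hsym₂ : S.w₂ x t ⬝ᵥ ((S.K₂ x)⁻¹ *ᵥ S.dw₂ x t) = S.dw₂ x t ⬝ᵥ ((S.K₂ x)⁻¹ *ᵥ S.w₂ x t) :=
    mySymmDot (mySymmInv (S.hK₂symm x hx)) _ _
  have heq : S.μ * (S.dw₁ x t ⬝ᵥ ((S.K₁ x)⁻¹ *ᵥ S.w₁ x t)
        + S.w₁ x t ⬝ᵥ ((S.K₁ x)⁻¹ *ᵥ S.dw₁ x t))
      + S.μ * (S.dw₂ x t ⬝ᵥ ((S.K₂ x)⁻¹ *ᵥ S.w₂ x t)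
        + S.w₂ x t ⬝ᵥ ((S.K₂ x)⁻¹ *ᵥ S.dw₂ x t))
      + S.β / S.μ * ((S.dq₁ x t - S.dq₂ x t) * (S.q₁ x t - S.q₂ x t)
        + (S.q₁ x t - S.q₂ x t) * (S.dq₁ x t - S.dq₂ x t)) = IDd S x t := by
    unfold IDd
    rw [hsym₁, hsym₂]
    ring
  rw [← heq]
  exact h

-- pointwise pde dotted with a vector
lemma pdeDot₁ (v : Fin 3 → ℝ) {x : Fin 3 → ℝ} (hx : x ∈ S.Ω) {t : ℝ} (ht : t ∈ Icc (0:ℝ) S.T) :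
    S.γ / S.φ₁ x * (v ⬝ᵥ S.dw₁ x t) + S.μ * (v ⬝ᵥ ((S.K₁ x)⁻¹ *ᵥ S.w₁ x t))
      + v ⬝ᵥ S.gq₁ x t = 0 := by
  have hp := S.pde₁ x hx t ht
  have h := congrArg (fun u => v ⬝ᵥ u) hp
  simpa [dotProduct_add, dotProduct_smul, smul_eq_mul] using h

lemma pdeDot₂ (v : Fin 3 → ℝ) {x : Fin 3 → ℝ} (hx : x ∈ S.Ω) {t : ℝ} (ht : t ∈ Icc (0:ℝ) S.T) :
    S.γ / S.φ₂ x * (v ⬝ᵥ S.dw₂ x t) + S.μ * (v ⬝ᵥ ((S.K₂ x)⁻¹ *ᵥ S.w₂ x t))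
      + v ⬝ᵥ S.gq₂ x t = 0 := by
  have hp := S.pde₂ x hx t ht
  have h := congrArg (fun u => v ⬝ᵥ u) hp
  simpa [dotProduct_add, dotProduct_smul, smul_eq_mul] using h

-- identity A pointwise
lemma idA : ∀ x ∈ S.Ω, ∀ t ∈ Icc (0:ℝ) S.T,
    Ig S x t = -(ID S x t) - B11 S x t - B12 S x t := by
  intro x hx t ht
  have hd₁ := pdeDot₁ S (S.w₁ x t) hx ht
  have hd₂ := pdeDot₂ S (S.w₂ x t) hx ht
  have hm₁ := S.mass₁ x hx t ht
  have hm₂ := S.mass₂ x hx t ht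
  unfold Ig ID B11 B12
  rw [hm₁, hm₂]
  linear_combination hd₁ + hd₂

-- divergence of time derivative identities
lemma idDiv₁ : ∀ x ∈ S.Ω, ∀ t ∈ Icc (0:ℝ) S.T,
    divOf (S.Jdw₁ x t) = -(S.β / S.μ) * (S.dq₁ x t - S.dq₂ x t) := by
  intro x hx t ht
  have h1 := S.hdivcomm₁ x hx t ht
  have hbase : HasDerivWithinAt (fun s => -(S.β / S.μ) * (S.q₁ x s - S.q₂ x s))
      (-(S.β / S.μ) * (S.dq₁ x t - S.dq₂ x t)) (Icc (0:ℝ) S.T) t :=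
    ((S.hdq₁ x hx t ht).sub (S.hdq₂ x hx t ht)).const_mul _
  have h2 : HasDerivWithinAt (fun s => divOf (S.Jw₁ x s))
      (-(S.β / S.μ) * (S.dq₁ x t - S.dq₂ x t)) (Icc (0:ℝ) S.T) t :=
    hbase.congr (fun s hs => S.mass₁ x hx s hs) (S.mass₁ x hx t ht)
  exact myDerivUnique S.hT ht h1 h2

lemma idDiv₂ : ∀ x ∈ S.Ω, ∀ t ∈ Icc (0:ℝ) S.T,
    divOf (S.Jdw₂ x t) = (S.β / S.μ) * (S.dq₁ x t - S.dq₂ x t) := by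
  intro x hx t ht
  have h1 := S.hdivcomm₂ x hx t ht
  have hbase : HasDerivWithinAt (fun s => (S.β / S.μ) * (S.q₁ x s - S.q₂ x s))
      ((S.β / S.μ) * (S.dq₁ x t - S.dq₂ x t)) (Icc (0:ℝ) S.T) t :=
    ((S.hdq₁ x hx t ht).sub (S.hdq₂ x hx t ht)).const_mul _
  have h2 : HasDerivWithinAt (fun s => divOf (S.Jw₂ x s))
      ((S.β / S.μ) * (S.dq₁ x t - S.dq₂ x t)) (Icc (0:ℝ) S.T) t :=
    hbase.congr (fun s hs => S.mass₂ x hx s hs) (S.mass₂ x hx t ht)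
  exact myDerivUnique S.hT ht h1 h2

-- identity B pointwise
lemma idB : ∀ x ∈ S.Ω, ∀ t ∈ Icc (0:ℝ) S.T,
    IDd S x t = -(2 * IR S x t) - 2 * B21 S x t - 2 * B22 S x t := by
  intro x hx t ht
  have hd₁ := pdeDot₁ S (S.dw₁ x t) hx ht
  have hd₂ := pdeDot₂ S (S.dw₂ x t) hx ht
  unfold IDd IR B21 B22
  rw [idDiv₁ S x hx t ht, idDiv₂ S x hx t ht]
  linear_combination 2 * hd₁ + 2 * hd₂

lemma dotSelfNonneg (v : Fin 3 → ℝ) : 0 ≤ v ⬝ᵥ v :=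
  Finset.sum_nonneg fun i _ => mul_self_nonneg _

lemma nonnegIE : ∀ x ∈ S.Ω, ∀ t : ℝ, 0 ≤ IE S x t := by
  intro x hx t
  unfold IE
  have h₁ := S.hφ₁pos x hx
  have h₂ := S.hφ₂pos x hx
  have := S.hγ
  exact add_nonneg (mul_nonneg (by positivity) (dotSelfNonneg _))
    (mul_nonneg (by positivity) (dotSelfNonneg _))

lemma nonnegIR : ∀ x ∈ S.Ω, ∀ t : ℝ, 0 ≤ IR S x t := by
  intro x hx t
  unfold IR
  have h₁ := S.hφ₁pos x hx
  have h₂ := S.hφ₂pos x hx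
  have := S.hγ
  exact add_nonneg (mul_nonneg (by positivity) (dotSelfNonneg _))
    (mul_nonneg (by positivity) (dotSelfNonneg _))

lemma quadNonneg {M : Matrix (Fin 3) (Fin 3) ℝ} (hM : M.PosDef) (v : Fin 3 → ℝ) :
    0 ≤ v ⬝ᵥ (M⁻¹ *ᵥ v) := by
  have := hM.inv.posSemidef.dotProduct_mulVec_nonneg v
  simpa using this

lemma nonnegID : ∀ x ∈ S.Ω, ∀ t : ℝ, 0 ≤ ID S x t := by
  intro x hx t
  unfold ID
  have h₁ := quadNonneg (S.hK₁pd x hx) (S.w₁ x t)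
  have h₂ := quadNonneg (S.hK₂pd x hx) (S.w₂ x t)
  have hμ := S.hμ
  have hβ := S.hβ
  have hq := mul_self_nonneg (S.q₁ x t - S.q₂ x t)
  have hbμ : (0:ℝ) ≤ S.β / S.μ := (div_pos hβ hμ).le
  nlinarith

end AuxLemmas3

/-- **Theorem 3.1 (backward-in-time uniqueness)**, phrased for the differences
`(w₁, w₂, q₁, q₂)` of two solutions of the DPP initial-boundary value problem sharing the
same body forces and boundary data.  If `Ω` is connected and the velocity differences
vanish at time `T`, then they vanish for all `t ∈ [0,T]`, and for each `t` the pressure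
differences are a common constant `C(t)` throughout `Ω`. -/
theorem stmt_5 (S : DPP) (hconn : IsConnected S.Ω)
    (hterm : ∀ x ∈ S.Ω, S.w₁ x S.T = 0 ∧ S.w₂ x S.T = 0) :
    (∀ x ∈ S.Ω, ∀ t ∈ Icc (0:ℝ) S.T, S.w₁ x t = 0 ∧ S.w₂ x t = 0) ∧
    (∀ t ∈ Icc (0:ℝ) S.T, ∃ C : ℝ, ∀ x ∈ S.Ω, S.q₁ x t = C ∧ S.q₂ x t = C) := by
  obtain ⟨x₀, hx₀⟩ := hconn.nonempty
  have hΩm : MeasurableSet S.Ω := S.hΩopen.measurableSet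
  -- integrability of all integrands at each fixed time
  have intIE : ∀ t ∈ Icc (0:ℝ) S.T, IntegrableOn (fun x => IE S x t) S.Ω :=
    fun t ht => myIntOn' S (contIE S) (bddIE S) ht
  have intIg : ∀ t ∈ Icc (0:ℝ) S.T, IntegrableOn (fun x => Ig S x t) S.Ω :=
    fun t ht => myIntOn' S (contIg S) (bddIg S) ht
  have intIR : ∀ t ∈ Icc (0:ℝ) S.T, IntegrableOn (fun x => IR S x t) S.Ω :=
    fun t ht => myIntOn' S (contIR S) (bddIR S) ht
  have intID : ∀ t ∈ Icc (0:ℝ) S.T, IntegrableOn (fun x => ID S x t) S.Ω :=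
    fun t ht => myIntOn' S (contID S) (bddID S) ht
  have intB11 : ∀ t ∈ Icc (0:ℝ) S.T, IntegrableOn (fun x => B11 S x t) S.Ω :=
    fun t ht => myIntOn' S (contB11 S) (bddB11 S) ht
  have intB12 : ∀ t ∈ Icc (0:ℝ) S.T, IntegrableOn (fun x => B12 S x t) S.Ω :=
    fun t ht => myIntOn' S (contB12 S) (bddB12 S) ht
  have intB21 : ∀ t ∈ Icc (0:ℝ) S.T, IntegrableOn (fun x => B21 S x t) S.Ω :=
    fun t ht => myIntOn' S (contB21 S) (bddB21 S) ht
  have intB22 : ∀ t ∈ Icc (0:ℝ) S.T, IntegrableOn (fun x => B22 S x t) S.Ω :=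
    fun t ht => myIntOn' S (contB22 S) (bddB22 S) ht
  have hErfl : ∀ t : ℝ, S.E t = ∫ x in S.Ω, IE S x t := fun t => rfl
  -- derivative of E
  have hE' : ∀ t ∈ Icc (0:ℝ) S.T,
      HasDerivWithinAt S.E (∫ x in S.Ω, Ig S x t) (Icc (0:ℝ) S.T) t := by
    intro t ht
    exact S.leibniz (IE S) (Ig S) (derivIE S) (contIE S) (contIg S) (bddIE S) (bddIg S) t ht
  -- integral identity A
  have hIdA : ∀ t ∈ Icc (0:ℝ) S.T,
      (∫ x in S.Ω, Ig S x t) = -(∫ x in S.Ω, ID S x t) := by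
    intro t ht
    have h1 : (∫ x in S.Ω, Ig S x t)
        = ∫ x in S.Ω, (-(ID S x t) - B11 S x t - B12 S x t) :=
      setIntegral_congr_fun hΩm (fun x hx => idA S x hx t ht)
    have hB11 : (∫ x in S.Ω, B11 S x t) = 0 := S.H1₁ t ht
    have hB12 : (∫ x in S.Ω, B12 S x t) = 0 := S.H1₂ t ht
    have iA : IntegrableOn (fun x => -(ID S x t) - B11 S x t) S.Ω :=
      ((intID t ht).neg).sub (intB11 t ht)
    have e1 : (∫ x in S.Ω, (-(ID S x t) - B11 S x t - B12 S x t))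
        = (∫ x in S.Ω, (-(ID S x t) - B11 S x t)) - ∫ x in S.Ω, B12 S x t :=
      integral_sub iA (intB12 t ht)
    have e2 : (∫ x in S.Ω, (-(ID S x t) - B11 S x t))
        = (∫ x in S.Ω, -(ID S x t)) - ∫ x in S.Ω, B11 S x t :=
      integral_sub ((intID t ht).neg) (intB11 t ht)
    have e3 : (∫ x in S.Ω, -(ID S x t)) = -(∫ x in S.Ω, ID S x t) := integral_neg _
    rw [h1]
    linarith [e1, e2, e3, hB11, hB12]
  -- derivative of ∫ ID
  have hD' : ∀ t ∈ Icc (0:ℝ) S.T,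
      HasDerivWithinAt (fun s => ∫ x in S.Ω, ID S x s)
        (-(2 * ∫ x in S.Ω, IR S x t)) (Icc (0:ℝ) S.T) t := by
    intro t ht
    have h := S.leibniz (ID S) (IDd S) (derivID S) (contID S) (contIDd S) (bddID S) (bddIDd S) t ht
    have hval : (∫ x in S.Ω, IDd S x t) = -(2 * ∫ x in S.Ω, IR S x t) := by
      have h1 : (∫ x in S.Ω, IDd S x t)
          = ∫ x in S.Ω, (-(2 * IR S x t) - 2 * B21 S x t - 2 * B22 S x t) :=
        setIntegral_congr_fun hΩm (fun x hx => idB S x hx t ht)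
      have hB21 : (∫ x in S.Ω, B21 S x t) = 0 := S.H2₁ t ht
      have hB22 : (∫ x in S.Ω, B22 S x t) = 0 := S.H2₂ t ht
      have iA : IntegrableOn (fun x => -(2 * IR S x t) - 2 * B21 S x t) S.Ω :=
        (((intIR t ht).const_mul 2).neg).sub ((intB21 t ht).const_mul 2)
      have e1 : (∫ x in S.Ω, (-(2 * IR S x t) - 2 * B21 S x t - 2 * B22 S x t))
          = (∫ x in S.Ω, (-(2 * IR S x t) - 2 * B21 S x t)) - ∫ x in S.Ω, 2 * B22 S x t :=
        integral_sub iA ((intB22 t ht).const_mul 2)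
      have e2 : (∫ x in S.Ω, (-(2 * IR S x t) - 2 * B21 S x t))
          = (∫ x in S.Ω, -(2 * IR S x t)) - ∫ x in S.Ω, 2 * B21 S x t :=
        integral_sub (((intIR t ht).const_mul 2).neg) ((intB21 t ht).const_mul 2)
      have e3 : (∫ x in S.Ω, -(2 * IR S x t)) = -(∫ x in S.Ω, 2 * IR S x t) := integral_neg _
      have e4 : (∫ x in S.Ω, 2 * IR S x t) = 2 * ∫ x in S.Ω, IR S x t := integral_const_mul _ _
      have e5 : (∫ x in S.Ω, 2 * B21 S x t) = 2 * ∫ x in S.Ω, B21 S x t := integral_const_mul _ _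
      have e6 : (∫ x in S.Ω, 2 * B22 S x t) = 2 * ∫ x in S.Ω, B22 S x t := integral_const_mul _ _
      rw [h1]
      rw [e1, e2, e3, e4, e5, e6, hB21, hB22]
      ring
    rw [← hval]
    exact h
  -- positivity
  have hDnn : ∀ t ∈ Icc (0:ℝ) S.T, 0 ≤ ∫ x in S.Ω, ID S x t :=
    fun t ht => setIntegral_nonneg hΩm fun x hx => nonnegID S x hx t
  have hEnn : ∀ t ∈ Icc (0:ℝ) S.T, 0 ≤ S.E t := fun t ht => by
    rw [hErfl t]
    exact setIntegral_nonneg hΩm fun x hx => nonnegIE S x hx t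
  have hET : S.E S.T = 0 := by
    rw [hErfl S.T]
    have heq : EqOn (fun x => IE S x S.T) (fun _ => (0:ℝ)) S.Ω := fun x hx => by
      simp only [IE, (hterm x hx).1, (hterm x hx).2]
      simp
    rw [setIntegral_congr_fun hΩm heq]
    simp
  -- Cauchy–Schwarz via quadratic nonnegativity
  have hquad : ∀ t ∈ Icc (0:ℝ) S.T,
      (∫ x in S.Ω, Ig S x t) ^ 2 ≤ S.E t * (2 * ∫ x in S.Ω, IR S x t) := by
    intro t ht
    have key : ∀ lam : ℝ, 0 ≤ (∫ x in S.Ω, IR S x t) * (lam * lam)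
        + (2 * ∫ x in S.Ω, Ig S x t) * lam + 2 * S.E t := by
      intro lam
      have hsplit : (∫ x in S.Ω, IR S x t) * (lam * lam)
          + (2 * ∫ x in S.Ω, Ig S x t) * lam + 2 * S.E t
          = ∫ x in S.Ω, ((lam * lam) * IR S x t + (2 * lam) * Ig S x t + 2 * IE S x t) := by
        have iA : IntegrableOn (fun x => (lam * lam) * IR S x t + (2 * lam) * Ig S x t) S.Ω :=
          ((intIR t ht).const_mul _).add ((intIg t ht).const_mul _)
        have e1 : (∫ x in S.Ω, ((lam * lam) * IR S x t + (2 * lam) * Ig S x t + 2 * IE S x t))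
            = (∫ x in S.Ω, ((lam * lam) * IR S x t + (2 * lam) * Ig S x t))
              + ∫ x in S.Ω, 2 * IE S x t :=
          integral_add iA ((intIE t ht).const_mul _)
        have e2 : (∫ x in S.Ω, ((lam * lam) * IR S x t + (2 * lam) * Ig S x t))
            = (∫ x in S.Ω, (lam * lam) * IR S x t) + ∫ x in S.Ω, (2 * lam) * Ig S x t :=
          integral_add ((intIR t ht).const_mul _) ((intIg t ht).const_mul _)
        have e3 : (∫ x in S.Ω, (lam * lam) * IR S x t)
            = (lam * lam) * ∫ x in S.Ω, IR S x t := integral_const_mul _ _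
        have e4 : (∫ x in S.Ω, (2 * lam) * Ig S x t)
            = (2 * lam) * ∫ x in S.Ω, Ig S x t := integral_const_mul _ _
        have e5 : (∫ x in S.Ω, 2 * IE S x t) = 2 * ∫ x in S.Ω, IE S x t := integral_const_mul _ _
        rw [e1, e2, e3, e4, e5, hErfl t]
        ring
      rw [hsplit]
      refine setIntegral_nonneg hΩm fun x hx => ?_
      have hid : (lam * lam) * IR S x t + (2 * lam) * Ig S x t + 2 * IE S x t
          = (S.γ / S.φ₁ x) * ((S.w₁ x t + lam • S.dw₁ x t) ⬝ᵥ (S.w₁ x t + lam • S.dw₁ x t))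
            + (S.γ / S.φ₂ x) * ((S.w₂ x t + lam • S.dw₂ x t) ⬝ᵥ (S.w₂ x t + lam • S.dw₂ x t)) := by
        simp only [IE, Ig, IR, dotProduct_add, add_dotProduct, dotProduct_smul, smul_dotProduct,
          smul_eq_mul]
        have h1 := (S.hφ₁pos x hx).ne'
        have h2 := (S.hφ₂pos x hx).ne'
        field_simp
        rw [dotProduct_comm (S.dw₁ x t) (S.w₁ x t), dotProduct_comm (S.dw₂ x t) (S.w₂ x t)]
        ring
      rw [hid]
      have hp1 := S.hφ₁pos x hx
      have hp2 := S.hφ₂pos x hx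
      have hγ := S.hγ
      exact add_nonneg (mul_nonneg (by positivity) (dotSelfNonneg _))
        (mul_nonneg (by positivity) (dotSelfNonneg _))
    have hd := discrim_le_zero key
    rw [discrim] at hd
    nlinarith [hd]
  -- backward uniqueness of the energy
  have hEzero : ∀ t ∈ Icc (0:ℝ) S.T, S.E t = 0 := by
    refine myBackward S.hT (g := fun s => -(∫ x in S.Ω, ID S x s))
      (r := fun s => 2 * ∫ x in S.Ω, IR S x s) ?_ ?_ hEnn ?_ ?_ hET
    · intro t ht
      have h := hE' t ht
      rw [hIdA t ht] at h
      exact h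
    · intro t ht
      simpa using (hD' t ht).fun_neg
    · intro t ht
      exact neg_nonpos_of_nonneg (hDnn t ht)
    · intro t ht
      show (-(∫ x in S.Ω, ID S x t)) ^ 2 ≤ S.E t * (2 * ∫ x in S.Ω, IR S x t)
      rw [← hIdA t ht]
      exact hquad t ht
  -- part 1 : velocities vanish
  have part1 : ∀ x ∈ S.Ω, ∀ t ∈ Icc (0:ℝ) S.T, S.w₁ x t = 0 ∧ S.w₂ x t = 0 := by
    intro x hx t ht
    have hz : ∀ y ∈ S.Ω, IE S y t = 0 := by
      apply myZero S.hΩopen S.hΩbdd (myFix S (contIE S) ht) (intIE t ht)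
        (fun y hy => nonnegIE S y hy t)
      rw [← hErfl t]
      exact hEzero t ht
    have h0 := hz x hx
    simp only [IE] at h0
    have hp1 := S.hφ₁pos x hx
    have hp2 := S.hφ₂pos x hx
    have hγ := S.hγ
    have hc1 : (0:ℝ) < S.γ / (2 * S.φ₁ x) := by positivity
    have hc2 : (0:ℝ) < S.γ / (2 * S.φ₂ x) := by positivity
    have hn1 : 0 ≤ S.γ / (2 * S.φ₁ x) * (S.w₁ x t ⬝ᵥ S.w₁ x t) :=
      mul_nonneg hc1.le (dotSelfNonneg _)
    have hn2 : 0 ≤ S.γ / (2 * S.φ₂ x) * (S.w₂ x t ⬝ᵥ S.w₂ x t) :=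
      mul_nonneg hc2.le (dotSelfNonneg _)
    have hA : S.γ / (2 * S.φ₁ x) * (S.w₁ x t ⬝ᵥ S.w₁ x t) = 0 := by linarith
    have hB : S.γ / (2 * S.φ₂ x) * (S.w₂ x t ⬝ᵥ S.w₂ x t) = 0 := by linarith
    constructor
    · refine dotProduct_self_eq_zero.1 ?_
      rcases mul_eq_zero.1 hA with h | h
      · exact absurd h hc1.ne'
      · exact h
    · refine dotProduct_self_eq_zero.1 ?_
      rcases mul_eq_zero.1 hB with h | h
      · exact absurd h hc2.ne'
      · exact h
  refine ⟨part1, ?_⟩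
  -- part 2 : pressures are constant
  intro t ht
  have hdw₁0 : ∀ x ∈ S.Ω, S.dw₁ x t = 0 := by
    intro x hx
    have hzero : HasDerivWithinAt (S.w₁ x) (0 : Fin 3 → ℝ) (Icc (0:ℝ) S.T) t :=
      (hasDerivWithinAt_const t _ (0 : Fin 3 → ℝ)).congr
        (fun s hs => (part1 x hx s hs).1) ((part1 x hx t ht).1)
    exact myDerivUnique S.hT ht (S.hdw₁ x hx t ht) hzero
  have hgq₁0 : ∀ x ∈ S.Ω, S.gq₁ x t = 0 := by
    intro x hx
    have hp := S.pde₁ x hx t ht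
    rw [(part1 x hx t ht).1, hdw₁0 x hx] at hp
    simpa [Matrix.mulVec_zero, smul_zero] using hp
  have hdiv0 : ∀ x ∈ S.Ω, divOf (S.Jw₁ x t) = 0 := by
    intro x hx
    have hF := S.hJw₁ t ht x hx
    have hev : (fun y => S.w₁ y t) =ᶠ[nhds x] (fun _ => (0 : Fin 3 → ℝ)) :=
      Filter.eventuallyEq_of_mem (S.hΩopen.mem_nhds hx) (fun y hy => (part1 y hy t ht).1)
    have hF0 : HasFDerivAt (fun y => S.w₁ y t)
        (0 : (Fin 3 → ℝ) →L[ℝ] (Fin 3 → ℝ)) x :=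
      (hasFDerivAt_const (0 : Fin 3 → ℝ) x).congr_of_eventuallyEq hev
    rw [hF.unique hF0]
    simp [divOf]
  have hq12 : ∀ x ∈ S.Ω, S.q₁ x t = S.q₂ x t := by
    intro x hx
    have hm := S.mass₁ x hx t ht
    rw [hdiv0 x hx] at hm
    have hbμ : 0 < S.β / S.μ := div_pos S.hβ S.hμ
    rcases mul_eq_zero.1 hm.symm with h | h
    · exact absurd (neg_eq_zero.1 h) hbμ.ne'
    · linarith [sub_eq_zero.1 h]
  have hgrad0 : ∀ x ∈ S.Ω, HasFDerivAt (fun y => S.q₁ y t)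
      (0 : (Fin 3 → ℝ) →L[ℝ] ℝ) x := by
    intro x hx
    have h := S.hgq₁ t ht x hx
    rw [hgq₁0 x hx] at h
    have hg0 : gradCLM (0 : Fin 3 → ℝ) = 0 := by
      simp [gradCLM]
    rwa [hg0] at h
  have hconst := myConst S.hΩopen hconn.isPreconnected hgrad0
  exact ⟨S.q₁ x₀ t, fun x hx => ⟨hconst x hx x₀ hx₀, by
    rw [← hq12 x hx]
    exact hconst x hx x₀ hx₀⟩⟩
end

section
/- Let T > 0, ρ > 0, γ > 0, μ > 0 be real numbers and K a symmetric invertible 3×3 real matrix. Let a, b : [0,T] → ℝ³ be continuously differentiable and g_a, g_b, f_a, f_b : [0,T] → ℝ³ continuous, and suppose ρ a′(t) + μ K⁻¹ a(t) + g_a(t) = γ f_a(t) and ρ b′(t) + μ K⁻¹ b(t) + g_b(t) = γ f_b(t) for all t ∈ [0,T]. Then for every t ∈ [0,T]: [ (b ⋆ γ f_a)(t) + ρ b(t)·a(0) ] − [ (a ⋆ γ f_b)(t) + ρ a(t)·b(0) ] = (b ⋆ g_a)(t) − (a ⋆ g_b)(t), where · is the Euclidean dot product. -/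
open Set Matrix

/-- The Cauchy–Riemann (finite-time) convolution of two vector-valued signals,
with the Euclidean dot product: `(f ⋆ g)(t) = ∫₀ᵗ f(t−τ) · g(τ) dτ`. -/
noncomputable def convD (f g : ℝ → (Fin 3 → ℝ)) (t : ℝ) : ℝ :=
  ∫ τ in (0 : ℝ)..t, f (t - τ) ⬝ᵥ g τ

/-- **Pointwise form of the key intermediate identity Eq. (58)** in the proof of the
reciprocal relation (Theorem 4.1 of the paper).  For two solutions `a, b` of the momentum
equation `ρ v′ + μ K⁻¹ v + g_v = γ f_v`, the inertial and drag convolution terms cancel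
(by symmetry of `K` and the initial-data identity), leaving
`[(b ⋆ γ f_a)(t) + ρ b(t)·a(0)] − [(a ⋆ γ f_b)(t) + ρ a(t)·b(0)] = (b ⋆ g_a)(t) − (a ⋆ g_b)(t)`. -/
theorem stmt_10 (T ρ γ μ : ℝ) (hT : 0 < T) (hρ : 0 < ρ) (hγ : 0 < γ) (hμ : 0 < μ)
    (K : Matrix (Fin 3) (Fin 3) ℝ) (hKsym : K.IsSymm) (hKinv : IsUnit K.det)
    (a b a' b' ga gb fa fb : ℝ → (Fin 3 → ℝ))
    (ha : ∀ t ∈ Icc (0 : ℝ) T, HasDerivWithinAt a (a' t) (Icc (0 : ℝ) T) t)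
    (hb : ∀ t ∈ Icc (0 : ℝ) T, HasDerivWithinAt b (b' t) (Icc (0 : ℝ) T) t)
    (ha' : ContinuousOn a' (Icc (0 : ℝ) T))
    (hb' : ContinuousOn b' (Icc (0 : ℝ) T))
    (hga : ContinuousOn ga (Icc (0 : ℝ) T))
    (hgb : ContinuousOn gb (Icc (0 : ℝ) T))
    (hfa : ContinuousOn fa (Icc (0 : ℝ) T))
    (hfb : ContinuousOn fb (Icc (0 : ℝ) T))
    (heqa : ∀ t ∈ Icc (0 : ℝ) T, ρ • a' t + μ • (K⁻¹ *ᵥ a t) + ga t = γ • fa t)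
    (heqb : ∀ t ∈ Icc (0 : ℝ) T, ρ • b' t + μ • (K⁻¹ *ᵥ b t) + gb t = γ • fb t) :
    ∀ t ∈ Icc (0 : ℝ) T,
      (convD b (fun s => γ • fa s) t + ρ * (b t ⬝ᵥ a 0))
        - (convD a (fun s => γ • fb s) t + ρ * (a t ⬝ᵥ b 0))
      = convD b ga t - convD a gb t := by
  -- continuity of a, b
  have haC : ContinuousOn a (Icc 0 T) := fun x hx => (ha x hx).continuousWithinAt
  have hbC : ContinuousOn b (Icc 0 T) := fun x hx => (hb x hx).continuousWithinAt
  -- symmetry of K⁻¹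
  have hKinvSym : (K⁻¹)ᵀ = K⁻¹ := by
    rw [Matrix.transpose_nonsing_inv, hKsym.eq]
  have hsym : ∀ u w : Fin 3 → ℝ, u ⬝ᵥ (K⁻¹ *ᵥ w) = w ⬝ᵥ (K⁻¹ *ᵥ u) := by
    intro u w
    rw [Matrix.dotProduct_mulVec, ← hKinvSym, Matrix.vecMul_transpose, hKinvSym,
      dotProduct_comm]
  -- continuity helpers
  have hdotC : ∀ {u v : ℝ → Fin 3 → ℝ} {s : Set ℝ}, ContinuousOn u s → ContinuousOn v s →
      ContinuousOn (fun τ => u τ ⬝ᵥ v τ) s := by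
    intro u v s hu hv
    simp only [dotProduct]
    exact continuousOn_finset_sum _ fun i _ =>
      ((continuous_apply i).comp_continuousOn hu).mul ((continuous_apply i).comp_continuousOn hv)
  have hmvC : ∀ {u : ℝ → Fin 3 → ℝ} {s : Set ℝ}, ContinuousOn u s →
      ContinuousOn (fun τ => K⁻¹ *ᵥ u τ) s := by
    intro u s hu
    have hc : Continuous fun v : Fin 3 → ℝ => K⁻¹ *ᵥ v := by
      have := (Matrix.mulVecLin K⁻¹).continuous_of_finiteDimensional
      exact this
    exact hc.comp_continuousOn hu
  -- coordinate/dot derivative helpers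
  have hproj : ∀ {u : ℝ → Fin 3 → ℝ} {u' : Fin 3 → ℝ} {x : ℝ} (i : Fin 3),
      HasDerivAt u u' x → HasDerivAt (fun τ => u τ i) (u' i) x := by
    intro u u' x i h
    have := ((ContinuousLinearMap.proj (R := ℝ) (φ := fun _ : Fin 3 => ℝ) i)).hasFDerivAt.comp_hasDerivAt x h
    exact this
  have hdotD : ∀ {u v : ℝ → Fin 3 → ℝ} {u' v' : Fin 3 → ℝ} {x : ℝ},
      HasDerivAt u u' x → HasDerivAt v v' x →
      HasDerivAt (fun τ => u τ ⬝ᵥ v τ) (u' ⬝ᵥ v x + u x ⬝ᵥ v') x := by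
    intro u v u' v' x hu hv
    have h := HasDerivAt.fun_sum (A := fun i (y : ℝ) => u y i * v y i)
      (A' := fun i => u' i * v x i + u x i * v' i) (u := Finset.univ)
      (fun i _ => (hproj i hu).mul (hproj i hv))
    simpa [dotProduct, Finset.sum_add_distrib] using h
  intro t ht
  obtain ⟨ht0, htT⟩ := ht
  have huIcc : uIcc (0:ℝ) t = Icc 0 t := uIcc_of_le ht0
  have hmap : ∀ τ ∈ Icc (0:ℝ) t, τ ∈ Icc (0:ℝ) T := fun τ hτ => ⟨hτ.1, hτ.2.trans htT⟩
  have hmap' : ∀ τ ∈ Icc (0:ℝ) t, t - τ ∈ Icc (0:ℝ) T := fun τ hτ =>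
    ⟨by linarith [hτ.2], by linarith [hτ.1]⟩
  have hreflC : ∀ {f : ℝ → Fin 3 → ℝ}, ContinuousOn f (Icc 0 T) →
      ContinuousOn (fun τ => f (t - τ)) (Icc 0 t) := by
    intro f hf
    exact hf.comp ((continuous_const.sub continuous_id).continuousOn) hmap'
  -- reflection of integrals
  have refl : ∀ f : ℝ → ℝ, (∫ τ in (0:ℝ)..t, f (t - τ)) = ∫ τ in (0:ℝ)..t, f τ := by
    intro f
    simpa using intervalIntegral.integral_comp_sub_left f t
  -- main interior derivative facts
  have haA : ∀ x ∈ Ioo (0:ℝ) T, HasDerivAt a (a' x) x := fun x hx =>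
    (ha x ⟨hx.1.le, hx.2.le⟩).hasDerivAt (Icc_mem_nhds hx.1 hx.2)
  have hbA : ∀ x ∈ Ioo (0:ℝ) T, HasDerivAt b (b' x) x := fun x hx =>
    (hb x ⟨hx.1.le, hx.2.le⟩).hasDerivAt (Icc_mem_nhds hx.1 hx.2)
  -- abbreviations
  set I1 : ℝ := ∫ τ in (0:ℝ)..t, b (t - τ) ⬝ᵥ a' τ with hI1
  set I2 : ℝ := ∫ τ in (0:ℝ)..t, b' (t - τ) ⬝ᵥ a τ with hI2
  set I1' : ℝ := ∫ τ in (0:ℝ)..t, a (t - τ) ⬝ᵥ b' τ with hI1'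
  set J1 : ℝ := ∫ τ in (0:ℝ)..t, b (t - τ) ⬝ᵥ (K⁻¹ *ᵥ a τ) with hJ1
  set J2 : ℝ := ∫ τ in (0:ℝ)..t, a (t - τ) ⬝ᵥ (K⁻¹ *ᵥ b τ) with hJ2
  -- integrabilities on [0,t]
  have mkInt : ∀ {f : ℝ → ℝ}, ContinuousOn f (Icc 0 t) →
      IntervalIntegrable f MeasureTheory.volume 0 t := by
    intro f hf
    apply ContinuousOn.intervalIntegrable
    rwa [huIcc]
  have hint1 : IntervalIntegrable (fun τ => b (t - τ) ⬝ᵥ a' τ) MeasureTheory.volume 0 t :=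
    (mkInt (hdotC (hreflC hbC) (ha'.mono hmap)))
  have hint2 : IntervalIntegrable (fun τ => b' (t - τ) ⬝ᵥ a τ) MeasureTheory.volume 0 t :=
    (mkInt (hdotC (hreflC hb') (haC.mono hmap)))
  have hintJ1 : IntervalIntegrable (fun τ => b (t - τ) ⬝ᵥ (K⁻¹ *ᵥ a τ)) MeasureTheory.volume 0 t :=
    (mkInt (hdotC (hreflC hbC) (hmvC (haC.mono hmap))))
  have hintJ2 : IntervalIntegrable (fun τ => a (t - τ) ⬝ᵥ (K⁻¹ *ᵥ b τ)) MeasureTheory.volume 0 t :=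
    (mkInt (hdotC (hreflC haC) (hmvC (hbC.mono hmap))))
  have hintga : IntervalIntegrable (fun τ => b (t - τ) ⬝ᵥ ga τ) MeasureTheory.volume 0 t :=
    (mkInt (hdotC (hreflC hbC) (hga.mono hmap)))
  have hintgb : IntervalIntegrable (fun τ => a (t - τ) ⬝ᵥ gb τ) MeasureTheory.volume 0 t :=
    (mkInt (hdotC (hreflC haC) (hgb.mono hmap)))
  have hint1' : IntervalIntegrable (fun τ => a (t - τ) ⬝ᵥ b' τ) MeasureTheory.volume 0 t :=
    (mkInt (hdotC (hreflC haC) (hb'.mono hmap)))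
  -- FTC: integration by parts
  have key : I1 - I2 = b 0 ⬝ᵥ a t - b t ⬝ᵥ a 0 := by
    have hcontF : ContinuousOn (fun τ => b (t - τ) ⬝ᵥ a τ) (Icc 0 t) :=
      hdotC (hreflC hbC) (haC.mono hmap)
    have hderF : ∀ x ∈ Ioo (0:ℝ) t, HasDerivWithinAt (fun τ => b (t - τ) ⬝ᵥ a τ)
        (b (t - x) ⬝ᵥ a' x - b' (t - x) ⬝ᵥ a x) (Ioi x) x := by
      intro x hx
      have hxT : x ∈ Ioo (0:ℝ) T := ⟨hx.1, lt_of_lt_of_le hx.2 htT⟩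
      have htxT : t - x ∈ Ioo (0:ℝ) T := ⟨by linarith [hx.2], by
        have : t - x < t := by linarith [hx.1]
        linarith⟩
      have hA := haA x hxT
      have hB := hbA (t - x) htxT
      have hh : HasDerivAt (fun τ : ℝ => t - τ) (-1) x := by
        simpa using (hasDerivAt_id x).const_sub t
      have hBc : HasDerivAt (fun τ => b (t - τ)) ((-1 : ℝ) • b' (t - x)) x := by
        have := HasDerivAt.scomp x hB hh
        exact this
      have h := hdotD hBc hA
      have hval : (((-1:ℝ) • b' (t-x)) ⬝ᵥ a x + b (t-x) ⬝ᵥ a' x)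
          = b (t-x) ⬝ᵥ a' x - b' (t-x) ⬝ᵥ a x := by
        simp [smul_dotProduct]
        ring
      exact (hval ▸ h).hasDerivWithinAt
    have hintF' : IntervalIntegrable (fun x => b (t - x) ⬝ᵥ a' x - b' (t - x) ⬝ᵥ a x)
        MeasureTheory.volume 0 t := hint1.sub hint2
    have := intervalIntegral.integral_eq_sub_of_hasDeriv_right_of_le ht0 hcontF hderF hintF'
    have hsplit : (∫ x in (0:ℝ)..t, (b (t - x) ⬝ᵥ a' x - b' (t - x) ⬝ᵥ a x)) = I1 - I2 :=
      intervalIntegral.integral_sub hint1 hint2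
    rw [hsplit] at this
    simpa using this
  -- I2 = I1'
  have hI2eq : I2 = I1' := by
    have h2 := intervalIntegral.integral_comp_sub_left (a := (0:ℝ)) (b := t) (fun s => b' s ⬝ᵥ a (t - s)) t
    simp only [sub_sub_cancel, sub_self, sub_zero] at h2
    rw [hI2, hI1', h2]
    apply intervalIntegral.integral_congr
    intro τ _
    simp [dotProduct_comm]
  -- J1 = J2
  have hJeq : J1 = J2 := by
    have h2 := intervalIntegral.integral_comp_sub_left (a := (0:ℝ)) (b := t) (fun s => b s ⬝ᵥ (K⁻¹ *ᵥ a (t - s))) t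
    simp only [sub_sub_cancel, sub_self, sub_zero] at h2
    rw [hJ1, hJ2, h2]
    apply intervalIntegral.integral_congr
    intro τ _
    exact hsym _ _
  -- expansions
  have E1 : convD b (fun s => γ • fa s) t = ρ * I1 + μ * J1 + convD b ga t := by
    have h1 : convD b (fun s => γ • fa s) t
        = ∫ τ in (0:ℝ)..t, (ρ * (b (t - τ) ⬝ᵥ a' τ) + μ * (b (t - τ) ⬝ᵥ (K⁻¹ *ᵥ a τ))
            + b (t - τ) ⬝ᵥ ga τ) := by
      unfold convD
      apply intervalIntegral.integral_congr
      intro τ hτ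
      rw [huIcc] at hτ
      show b (t - τ) ⬝ᵥ (γ • fa τ) = _
      rw [← heqa τ (hmap τ hτ)]
      simp [dotProduct_add, dotProduct_smul, smul_eq_mul]
    rw [h1, intervalIntegral.integral_add ((hint1.const_mul ρ).add (hintJ1.const_mul μ)) hintga,
      intervalIntegral.integral_add (hint1.const_mul ρ) (hintJ1.const_mul μ),
      intervalIntegral.integral_const_mul, intervalIntegral.integral_const_mul]
    rfl
  have E2 : convD a (fun s => γ • fb s) t = ρ * I1' + μ * J2 + convD a gb t := by
    have h1 : convD a (fun s => γ • fb s) t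
        = ∫ τ in (0:ℝ)..t, (ρ * (a (t - τ) ⬝ᵥ b' τ) + μ * (a (t - τ) ⬝ᵥ (K⁻¹ *ᵥ b τ))
            + a (t - τ) ⬝ᵥ gb τ) := by
      unfold convD
      apply intervalIntegral.integral_congr
      intro τ hτ
      rw [huIcc] at hτ
      show a (t - τ) ⬝ᵥ (γ • fb τ) = _
      rw [← heqb τ (hmap τ hτ)]
      simp [dotProduct_add, dotProduct_smul, smul_eq_mul]
    rw [h1, intervalIntegral.integral_add ((hint1'.const_mul ρ).add (hintJ2.const_mul μ)) hintgb,
      intervalIntegral.integral_add (hint1'.const_mul ρ) (hintJ2.const_mul μ),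
      intervalIntegral.integral_const_mul, intervalIntegral.integral_const_mul]
    rfl
  -- finish
  have E4 : I1 + b t ⬝ᵥ a 0 = I1' + a t ⬝ᵥ b 0 := by
    have hcomm : b 0 ⬝ᵥ a t = a t ⬝ᵥ b 0 := dotProduct_comm _ _
    rw [← hI2eq]
    linarith [key]
  have E4' : ρ * I1 + ρ * (b t ⬝ᵥ a 0) = ρ * I1' + ρ * (a t ⬝ᵥ b 0) := by
    have := congrArg (fun x => ρ * x) E4
    simpa [mul_add] using this
  rw [E1, E2, hJeq]
  linarith [E4']
end
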